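/- arXiv:1701.05508 — 5 statements merged into one kernel-verified Lean document; each statement's English description precedes it below -/
import Mathlib

section
/- Let (K,v) be a henselian valued field of residue characteristic p > 0 containing all p-th roots of unity, and let b, c ∈ K with v(b) > 0 and v(c) > p/(p-1)·v(p). Then 1 + b and 1 + b + c differ multiplicatively by a p-th power in K, i.e., 1 + b ∈ (1 + b + c)·(K^×)^p. -/
open Polynomial Finset

section Aux

variable {K : Type*} [Field K] {Γ : Type*} [LinearOrderedCommGroupWithZero Γ]

private lemma aux_mul_le_cancel {a b c : Γ} (h : a * c ≤ b * c) (hc : c ≠ 0) : a ≤ b := by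
  have h2 := mul_le_mul_left h c⁻¹
  simpa [mul_assoc, hc] using h2

private lemma aux_pow_lt_cancel {a b : Γ} {n : ℕ} (hn : n ≠ 0) (h : a ^ n < b ^ n) : a < b := by
  by_contra hh
  push_neg at hh
  exact absurd (pow_le_pow_left' hh n) (not_le.mpr h)

private lemma aux_div_lt_one {a b : Γ} (h : a < b) (hb : b ≠ 0) : a / b < 1 := by
  refine lt_of_le_of_ne ((div_le_one₀ (lt_of_le_of_ne zero_le' (Ne.symm hb))).mpr h.le) ?_
  intro heq
  have hab : a = b := by rw [← div_mul_cancel₀ a hb, heq, one_mul]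
  exact absurd hab h.ne

private lemma aux_nat_le_one (w : Valuation K Γ) (n : ℕ) : w (n : K) ≤ 1 := by
  induction n with
  | zero => simp
  | succ n ih =>
    push_cast
    exact le_trans (w.map_add _ _) (max_le ih (le_of_eq w.map_one))

private lemma aux_one_sub_le (w : Valuation K Γ) {p : ℕ} (hp : p ≠ 0) {α β : K}
    (hα : IsPrimitiveRoot α p) (hαle : w α ≤ 1) (hβ : β ^ p = 1) :
    w (1 - β) ≤ w (1 - α) := by
  haveI : NeZero p := ⟨hp⟩
  obtain ⟨i, -, rfl⟩ := hα.eq_pow_of_pow_eq_one hβ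
  have key : 1 - α ^ i = (∑ k ∈ Finset.range i, α ^ k) * (1 - α) := by
    have h := geom_sum_mul α i
    linear_combination h
  rw [key, w.map_mul]
  have hsum : w (∑ k ∈ Finset.range i, α ^ k) ≤ 1 :=
    w.map_sum_le fun k _ => by rw [map_pow]; exact pow_le_one₀ zero_le' hαle
  calc w (∑ k ∈ Finset.range i, α ^ k) * w (1 - α) ≤ 1 * w (1 - α) :=
        mul_le_mul_left hsum _
    _ = w (1 - α) := one_mul _

end Aux

/-- Let (K,v) be a henselian valued field of residue characteristic p > 0
containing all p-th roots of unity, and let b, c ∈ K with v(b) > 0 and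
v(c) > p/(p-1)·v(p) (multiplicatively: w c ^ (p-1) < w p ^ p). Then
1 + b ∈ (1 + b + c)·(K^×)^p.  (Valuations are written multiplicatively:
additive v(a) > 0 corresponds to w a < 1, and additive v(a) > v(b) to w a < w b.) -/
theorem stmt0 {K : Type*} [Field K] {Γ : Type*} [LinearOrderedCommGroupWithZero Γ]
    (w : Valuation K Γ)
    (hhens : HenselianLocalRing w.valuationSubring)
    (p : ℕ) (hp : p.Prime)
    (hresp : w (p : K) < 1)  -- the residue characteristic is p
    (hroots : (Polynomial.X ^ p - 1 : Polynomial K).Splits)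
    (b c : K) (hb : w b < 1) (hc : w c ^ (p - 1) < w (p : K) ^ p) :
    ∃ u : Kˣ, 1 + b = (1 + b + c) * (u : K) ^ p := by
  classical
  haveI hFact : Fact p.Prime := ⟨hp⟩
  have hp1 : p - 1 ≠ 0 := by have := hp.two_le; omega
  -- residue char p implies p ≠ 0 in K
  have hpK : (p : K) ≠ 0 := by
    intro h0
    rw [h0, map_zero, zero_pow hp.ne_zero] at hc
    exact not_lt_zero' hc
  -- w c < 1
  have hwc1 : w c < 1 := by
    by_contra hh
    push_neg at hh
    have h1 : (1 : Γ) ≤ w c ^ (p - 1) := by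
      calc (1:Γ) = 1 ^ (p-1) := (one_pow _).symm
        _ ≤ w c ^ (p-1) := pow_le_pow_left' hh _
    have h2 : w (p : K) ^ p ≤ 1 := pow_le_one₀ zero_le' hresp.le
    exact absurd (hc.trans_le h2) (not_lt.mpr h1)
  -- find a primitive p-th root of unity ζ
  have hX : (X ^ p - 1 : K[X]) = X ^ p - C 1 := by rw [map_one]
  have hsep : (X ^ p - 1 : K[X]).Separable := by
    rw [hX]; exact separable_X_pow_sub_C 1 hpK one_ne_zero
  have hne0 : (X ^ p - 1 : K[X]) ≠ 0 := by rw [hX]; exact X_pow_sub_C_ne_zero hp.pos 1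
  have hdeg : (X ^ p - 1 : K[X]).natDegree = p := by rw [hX]; exact natDegree_X_pow_sub_C
  have hcard : Multiset.card (X ^ p - 1 : K[X]).roots = p := by
    rw [splits_iff_card_roots] at hroots; rw [hroots, hdeg]
  have hnodup : (X ^ p - 1 : K[X]).roots.Nodup := Polynomial.nodup_roots hsep
  have hfin : ((X ^ p - 1 : K[X]).roots.toFinset).card = p := by
    rw [Multiset.toFinset_card_of_nodup hnodup, hcard]
  obtain ⟨ζ, hζmem, hζne⟩ :=
    Finset.exists_mem_ne (by rw [hfin]; exact hp.one_lt) (1 : K)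
  have hζp : ζ ^ p = 1 := by
    have := (mem_roots hne0).mp (Multiset.mem_toFinset.mp hζmem)
    have h2 : ζ ^ p - 1 = 0 := by simpa [IsRoot] using this
    exact sub_eq_zero.mp h2
  have hζprim : IsPrimitiveRoot ζ p := by
    have hord : orderOf ζ ∣ p := orderOf_dvd_of_pow_eq_one hζp
    rcases hp.eq_one_or_self_of_dvd _ hord with h | h
    · exact absurd (orderOf_eq_one_iff.mp h) hζne
    · exact h ▸ IsPrimitiveRoot.orderOf ζ
  have hwζ : w ζ = 1 := by
    have h1 : w ζ ^ p = 1 := by rw [← map_pow, hζp, map_one]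
    exact (pow_eq_one_iff_left hp.ne_zero).mp h1
  -- the key valuation identity w(p) = w(ζ-1)^(p-1)
  set η : K := ζ - 1 with hηdef
  have hηne : η ≠ 0 := sub_ne_zero.mpr hζne
  set γ : Γ := w η with hγdef
  have hγ0 : γ ≠ 0 := by
    rw [hγdef]; exact (Valuation.ne_zero_iff w).mpr hηne
  have hηsub : w (1 - ζ) = γ := by
    rw [hγdef, hηdef, show ζ - 1 = -(1 - ζ) by ring, w.map_neg]
  have hγp : γ ^ (p - 1) = w (p : K) := by
    have hprod : (p : K) = ∏ μ ∈ primitiveRoots p K, (1 - μ) := by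
      have h1 := Polynomial.eval_one_cyclotomic_prime (R := K) (p := p)
      rw [cyclotomic_eq_prod_X_sub_primitiveRoots hζprim] at h1
      rw [← h1, eval_prod]
      exact Finset.prod_congr rfl fun μ _ => by simp
    have heach : ∀ μ ∈ primitiveRoots p K, w (1 - μ) = γ := by
      intro μ hμ
      have hμprim : IsPrimitiveRoot μ p := (mem_primitiveRoots hp.pos).mp hμ
      have hwμ : w μ = 1 := by
        have h1 : w μ ^ p = 1 := by rw [← map_pow, hμprim.pow_eq_one, map_one]
        exact (pow_eq_one_iff_left hp.ne_zero).mp h1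
      rw [← hηsub]
      exact le_antisymm (aux_one_sub_le w hp.ne_zero hζprim hwζ.le hμprim.pow_eq_one)
        (aux_one_sub_le w hp.ne_zero hμprim hwμ.le hζp)
    rw [hprod, map_prod, Finset.prod_congr rfl heach, Finset.prod_const,
      hζprim.card_primitiveRoots, Nat.totient_prime hp]
  have hγlt : γ < 1 := by
    by_contra hh
    push_neg at hh
    have h1 : (1:Γ) ≤ γ ^ (p - 1) := by
      calc (1:Γ) = 1 ^ (p-1) := (one_pow _).symm
        _ ≤ γ ^ (p-1) := pow_le_pow_left' hh _
    rw [hγp] at h1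
    exact absurd hresp (not_lt.mpr h1)
  -- set up B and d
  set B : K := 1 + b + c with hBdef
  have hwB : w B = 1 := by
    have hbc : w (b + c) < 1 := lt_of_le_of_lt (w.map_add _ _) (by simp [hb, hwc1])
    have : B = 1 + (b + c) := by rw [hBdef]; ring
    rw [this]; exact w.map_one_add_of_lt hbc
  have hBne : B ≠ 0 := by
    intro h; rw [h, map_zero] at hwB; exact zero_ne_one hwB
  set d : K := -c / B with hddef
  have hwd : w d = w c := by
    rw [hddef, map_div₀, w.map_neg, hwB, div_one]
  have hwd1 : w d < 1 := hwd ▸ hwc1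
  -- w d < γ^p
  have hwdγ : w d < γ ^ p := by
    have h1 : w d ^ (p - 1) < (γ ^ p) ^ (p - 1) := by
      rw [hwd]
      calc w c ^ (p-1) < w (p:K) ^ p := hc
        _ = (γ ^ (p-1)) ^ p := by rw [hγp]
        _ = (γ ^ p) ^ (p-1) := by rw [← pow_mul, ← pow_mul, Nat.mul_comm]
    exact aux_pow_lt_cancel hp1 h1
  -- the polynomial coefficients
  set q : K := η ^ p with hqdef
  have hq0 : q ≠ 0 := pow_ne_zero _ hηne
  have hwq : w q = γ ^ p := by rw [hqdef, map_pow, hγdef]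
  have hwq0 : (0:Γ) < w q := by
    rw [hwq]; exact lt_of_le_of_ne zero_le' (Ne.symm (pow_ne_zero _ hγ0))
  set coef : ℕ → K := fun i => if i = 0 then -d / q else (p.choose i : K) * η ^ i / q
    with hcoefdef
  -- all coefficients are integral
  have hcm : ∀ i, w (coef i) ≤ 1 := by
    intro i
    rcases Nat.eq_zero_or_pos i with rfl | hi
    · simp only [hcoefdef, if_pos rfl]
      rw [map_div₀, w.map_neg]
      exact ((div_le_one₀ hwq0).mpr (hwq ▸ hwdγ.le))
    · simp only [hcoefdef, if_neg hi.ne']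
      rw [map_div₀, div_le_one₀ hwq0, w.map_mul, map_pow, ← hγdef, hwq]
      rcases lt_trichotomy i p with hip | rfl | hpi
      · -- 0 < i < p : p ∣ choose
        obtain ⟨m, hm⟩ := hp.dvd_choose_self hi.ne' hip
        have h1 : w ((p.choose i : K)) ≤ γ ^ (p - 1) := by
          rw [hm, Nat.cast_mul, w.map_mul, hγp]
          calc w (p:K) * w (m:K) ≤ w (p:K) * 1 := mul_le_mul_right (aux_nat_le_one w m) _
            _ = w (p:K) := mul_one _
        calc w ((p.choose i : K)) * γ ^ i ≤ γ ^ (p-1) * γ ^ i :=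
              mul_le_mul_left h1 _
          _ = γ ^ ((p-1) + i) := by rw [pow_add]
          _ = γ ^ p * γ ^ (i - 1) := by rw [← pow_add]; congr 1; omega
          _ ≤ γ ^ p * 1 := mul_le_mul_right (pow_le_one₀ zero_le' hγlt.le) _
          _ = γ ^ p := mul_one _
      · simp [Nat.choose_self]
      · simp [Nat.choose_eq_zero_of_lt hpi]
  set R := w.valuationSubring with hRdef
  set rcoef : ℕ → R := fun i => ⟨coef i, (w.mem_valuationSubring_iff _).mpr (hcm i)⟩
    with hrcoefdef
  set F : R[X] := ∑ i ∈ Finset.range (p+1), monomial i (rcoef i) with hFdef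
  have hFcoeff : ∀ n, F.coeff n = if n ≤ p then rcoef n else 0 := by
    intro n
    rw [hFdef, finset_sum_coeff]
    simp only [coeff_monomial]
    rw [Finset.sum_ite_eq' (Finset.range (p+1)) n rcoef]
    simp only [Finset.mem_range, Nat.lt_succ_iff]
  have hcoefp : coef p = 1 := by
    simp only [hcoefdef, if_neg hp.ne_zero, Nat.choose_self, Nat.cast_one, one_mul, ← hqdef]
    exact div_self hq0
  have hFmonic : F.Monic := by
    apply monic_of_natDegree_le_of_coeff_eq_one p
    · rw [natDegree_le_iff_coeff_eq_zero]
      intro m hm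
      rw [hFcoeff m, if_neg (by omega)]
    · rw [hFcoeff p, if_pos le_rfl]
      exact Subtype.ext hcoefp
  -- Hensel hypotheses
  have hcoef1 : w (coef 1) = 1 := by
    have h1 : coef 1 = (p : K) * η / q := by
      simp only [hcoefdef, if_neg one_ne_zero, Nat.choose_one_right, pow_one]
    rw [h1, map_div₀, w.map_mul, ← hγdef, ← hγp, hwq, ← pow_succ]
    rw [show p - 1 + 1 = p by omega]
    exact div_self (pow_ne_zero _ hγ0)
  have hIntegers : w.Integers R := Valuation.integer.integers w
  have heval0 : eval 0 F = rcoef 0 := by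
    rw [← coeff_zero_eq_eval_zero, hFcoeff 0, if_pos (Nat.zero_le p)]
  have hderiv0 : eval 0 (derivative F) = rcoef 1 := by
    rw [← coeff_zero_eq_eval_zero, coeff_derivative, hFcoeff 1,
      if_pos hp.one_le]
    push_cast
    ring
  have h₁ : eval 0 F ∈ IsLocalRing.maximalIdeal R := by
    rw [heval0, IsLocalRing.mem_maximalIdeal, mem_nonunits_iff,
      hIntegers.isUnit_iff_valuation_eq_one]
    have hlt : w (coef 0) < 1 := by
      simp only [hcoefdef, if_pos rfl]
      rw [map_div₀, w.map_neg]
      exact aux_div_lt_one (hwq ▸ hwdγ) hwq0.ne'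
    intro h
    have : w ((algebraMap R K) (rcoef 0)) = w (coef 0) := rfl
    rw [this] at h
    rw [h] at hlt
    exact lt_irrefl _ hlt
  have h₂ : IsUnit (eval 0 (derivative F)) := by
    rw [hderiv0, hIntegers.isUnit_iff_valuation_eq_one]
    exact hcoef1
  obtain ⟨a, haroot, -⟩ := hhens.is_henselian F hFmonic 0 h₁ h₂
  set x : K := (a : K) with hxdef
  -- translate the root back to K
  have hx0 : ∑ i ∈ Finset.range (p+1), coef i * x ^ i = 0 := by
    have h1 : eval a F = ∑ i ∈ Finset.range (p+1), rcoef i * a ^ i := by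
      rw [hFdef, eval_finset_sum]
      exact Finset.sum_congr rfl fun i _ => by rw [eval_monomial]
    have h2 : (∑ i ∈ Finset.range (p+1), rcoef i * a ^ i) = 0 := by
      rw [← h1]; exact haroot
    have h3 := congrArg (algebraMap R K) h2
    push_cast at h3
    simpa using h3
  -- the key identity
  set S : K := ∑ k ∈ Finset.range p, (η * x) ^ (k+1) * (p.choose (k+1) : K) with hSdef
  have hA : q * (∑ i ∈ Finset.range (p+1), coef i * x ^ i) = S + -d := by
    rw [Finset.mul_sum, Finset.sum_range_succ']
    have hterm : ∀ i, q * (coef (i+1) * x ^ (i+1)) = (η * x) ^ (i+1) * (p.choose (i+1) : K) := by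
      intro i
      simp only [hcoefdef, if_neg (Nat.succ_ne_zero i)]
      calc q * ((p.choose (i+1) : K) * η ^ (i+1) / q * x ^ (i+1))
          = ((p.choose (i+1) : K) * η ^ (i+1) / q * q) * x ^ (i+1) := by ring
        _ = ((p.choose (i+1) : K) * η ^ (i+1)) * x ^ (i+1) := by
            rw [div_mul_cancel₀ _ hq0]
        _ = (η * x) ^ (i+1) * (p.choose (i+1) : K) := by rw [mul_pow]; ring
    have hterm0 : q * (coef 0 * x ^ 0) = -d := by
      simp only [hcoefdef, if_pos rfl, pow_zero, mul_one]
      rw [mul_comm, div_mul_cancel₀ _ hq0]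
    rw [hterm0, hSdef]
    congr 1
    exact Finset.sum_congr rfl fun i _ => hterm i
  have hB2 : (1 + η * x) ^ p = 1 + S := by
    rw [show (1 + η * x) = (η * x + 1) by ring, add_pow]
    simp only [one_pow, mul_one]
    rw [Finset.sum_range_succ']
    simp only [pow_zero, Nat.choose_zero_right, Nat.cast_one, one_mul]
    rw [hSdef, add_comm]
  have hSd : S = d := by
    have := hA
    rw [hx0, mul_zero] at this
    have h2 : S + -d = 0 := this.symm
    exact eq_of_sub_eq_zero (by linear_combination h2)
  have hkey : (1 + η * x) ^ p = 1 + d := by rw [hB2, hSd]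
  have hne : (1 + η * x) ≠ 0 := by
    intro h
    rw [h, zero_pow hp.ne_zero] at hkey
    have : w (1 + d) = 1 := w.map_one_add_of_lt hwd1
    rw [← hkey, map_zero] at this
    exact zero_ne_one this
  refine ⟨Units.mk0 _ hne, ?_⟩
  rw [Units.val_mk0, hkey, hddef]
  field_simp
  ring
end

section
/- Let (K,v) be a henselian valued field and let (F|K,v) be a valued function field which is a separable subextension of the completion K^c of (K,v). Then for every separating transcendence basis T of F|K, F is contained in the henselization of (K(T),v) taken inside K^c. -/
open Polynomial

/-- A subfield of a valued field is henselian if its valuation ring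
(for the restricted valuation) is a henselian local ring. -/
def Subfield.IsHenselian {Ω Γ : Type*} [Field Ω] [LinearOrderedCommGroupWithZero Γ]
    (w : Valuation Ω Γ) (K : Subfield Ω) : Prop :=
  HenselianLocalRing (w.comap K.subtype).valuationSubring

/-- The henselization of a subfield K of an algebraically closed valued field (Ω,w). -/
noncomputable def henselization {Ω Γ : Type*} [Field Ω] [LinearOrderedCommGroupWithZero Γ]
    (w : Valuation Ω Γ) (K : Subfield Ω) : Subfield Ω :=
  sInf {L : Subfield Ω | K ≤ L ∧ Subfield.IsHenselian w L}

/-- x is separable algebraic over the subfield M. -/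
def SepAlgOver {Ω : Type*} [Field Ω] (M : Subfield Ω) (x : Ω) : Prop :=
  ∃ f : Polynomial Ω, f ≠ 0 ∧ (∀ i, f.coeff i ∈ M) ∧ f.Separable ∧ Polynomial.eval x f = 0

/-- The set T is algebraically independent over the subfield M. -/
def AlgIndepOver {Ω : Type*} [Field Ω] (M : Subfield Ω) (T : Set Ω) : Prop :=
  ∀ (n : ℕ) (t : Fin n → Ω) (f : MvPolynomial (Fin n) Ω),
    (∀ i, t i ∈ T) → Function.Injective t → (∀ m, MvPolynomial.coeff m f ∈ M) →
    MvPolynomial.eval t f = 0 → f = 0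

/-- T is a separating transcendence basis of L over K: T ⊆ L, T algebraically
independent over K, and L separable algebraic over K(T). -/
def IsSepTranscBasis {Ω : Type*} [Field Ω] (K L : Subfield Ω) (T : Set Ω) : Prop :=
  T ⊆ (L : Set Ω) ∧ AlgIndepOver K T ∧
    ∀ x ∈ L, SepAlgOver (Subfield.closure ((K : Set Ω) ∪ T)) x

section Helpers

variable {k Γ : Type*} [Field k] [LinearOrderedCommGroupWithZero Γ]

lemma val_natCast_le_one (v : Valuation k Γ) (n : ℕ) : v n ≤ 1 := by
  induction n with
  | zero => simp
  | succ m ih =>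
    push_cast
    exact le_trans (v.map_add _ _) (max_le ih (le_of_eq v.map_one))

lemma isUnit_iff_val_eq_one (v : Valuation k Γ) (c : v.valuationSubring) :
    IsUnit c ↔ v (c : k) = 1 := by
  constructor
  · intro h
    obtain ⟨c', hcc'⟩ := isUnit_iff_exists_inv.mp h
    have h1 : (c : k) * (c' : k) = 1 := by exact_mod_cast congrArg (Subtype.val) hcc'
    have h2 : v (c : k) * v (c' : k) = 1 := by rw [← v.map_mul, h1, v.map_one]
    refine le_antisymm ((v.mem_valuationSubring_iff _).mp c.2) ?_
    calc (1 : Γ) = v (c : k) * v (c' : k) := h2.symm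
    _ ≤ v (c : k) * 1 := mul_le_mul_right ((v.mem_valuationSubring_iff _).mp c'.2) _
    _ = v (c : k) := mul_one _
  · intro h
    have hc0 : (c : k) ≠ 0 := by
      intro h0
      rw [h0, v.map_zero] at h
      exact zero_ne_one h
    refine isUnit_iff_exists_inv.mpr ⟨⟨(c : k)⁻¹, ?_⟩, ?_⟩
    · rw [v.mem_valuationSubring_iff, map_inv₀, h, inv_one]
    · exact Subtype.ext (by simpa using mul_inv_cancel₀ hc0)

lemma mem_maximalIdeal_iff_val_lt_one (v : Valuation k Γ) (c : v.valuationSubring) :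
    c ∈ IsLocalRing.maximalIdeal v.valuationSubring ↔ v (c : k) < 1 := by
  rw [IsLocalRing.mem_maximalIdeal, mem_nonunits_iff, isUnit_iff_val_eq_one]
  exact ⟨fun h => lt_of_le_of_ne ((v.mem_valuationSubring_iff _).mp c.2) h,
    fun h => ne_of_lt h⟩

lemma val_coeff_prod_le_one (v : Valuation k Γ) (s : Multiset k) (hs : ∀ r ∈ s, v r ≤ 1) :
    ∀ i, v (((s.map fun r => X - C r).prod).coeff i) ≤ 1 := by
  induction s using Multiset.induction_on with
  | empty =>
    intro i
    rcases Nat.eq_zero_or_pos i with rfl | hi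
    · simp
    · simp [coeff_one, Nat.pos_iff_ne_zero.mp hi]
  | cons b s ih =>
    intro i
    have hb : v b ≤ 1 := hs b (Multiset.mem_cons_self _ _)
    have ih' := ih (fun r hr => hs r (Multiset.mem_cons_of_mem hr))
    rw [Multiset.map_cons, Multiset.prod_cons, sub_mul, coeff_sub]
    refine le_trans (v.map_sub _ _) (max_le ?_ ?_)
    · rcases Nat.eq_zero_or_pos i with rfl | hi
      · simp
      · obtain ⟨j, rfl⟩ := Nat.exists_eq_add_of_lt hi
        rw [zero_add, coeff_X_mul]
        exact ih' j
    · rw [coeff_C_mul, v.map_mul]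
      calc v b * v _ ≤ 1 * 1 := mul_le_mul' hb (ih' i)
      _ = 1 := one_mul 1

lemma eval_map_hom {A B : Type*} [CommRing A] [CommRing B] (φ : A →+* B) (q : A[X]) (t : A) :
    φ (q.eval t) = (q.map φ).eval (φ t) := by
  rw [Polynomial.eval_map]
  exact (Polynomial.eval₂_at_apply φ t).symm

lemma val_eval_sub_le (v : Valuation k Γ) (p : k[X]) (hp : ∀ i, v (p.coeff i) ≤ 1)
    {a b : k} (ha : v a ≤ 1) (hb : v b ≤ 1) :
    v (p.eval a - p.eval b) ≤ v (a - b) := by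
  set O : Subring k := v.valuationSubring.toSubring with hO
  have hco : (↑p.coeffs : Set k) ⊆ O := by
    intro c hc
    obtain ⟨n, -, rfl⟩ := Polynomial.mem_coeffs_iff.mp (by exact_mod_cast hc)
    exact hp n
  set P : O[X] := p.toSubring O hco with hP
  have hmap : P.map O.subtype = p := Polynomial.map_toSubring p O hco
  set A : O := ⟨a, ha⟩
  set B : O := ⟨b, hb⟩
  obtain ⟨c, hc⟩ := Polynomial.sub_dvd_eval_sub A B P
  have key : ∀ t : O, p.eval (t : k) = ((P.eval t : O) : k) := by
    intro t
    conv_lhs => rw [← hmap]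
    rw [Polynomial.eval_map]
    exact Polynomial.eval₂_at_apply O.subtype t
  have h1 : p.eval a - p.eval b = (a - b) * (c : k) := by
    have := congrArg (Subtype.val : O → k) hc
    push_cast at this
    rw [key A, key B]
    exact congrArg (Subtype.val : O → k) hc
  rw [h1, v.map_mul]
  calc v (a - b) * v (c : k) ≤ v (a - b) * 1 :=
    mul_le_mul_right ((v.mem_valuationSubring_iff _).mp c.2) _
  _ = v (a - b) := mul_one _

lemma val_coeff_derivative_le_one (v : Valuation k Γ) (p : k[X]) (hp : ∀ i, v (p.coeff i) ≤ 1) :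
    ∀ i, v (p.derivative.coeff i) ≤ 1 := by
  intro i
  rw [Polynomial.coeff_derivative, v.map_mul]
  calc v (p.coeff (i+1)) * v ((i : k) + 1) ≤ 1 * 1 := by
        refine mul_le_mul' (hp _) ?_
        have := val_natCast_le_one v (i + 1)
        push_cast at this
        exact this
  _ = 1 := one_mul 1

lemma reverse_X_sub_C' (b : k) : (X - C b).reverse = 1 - C b * X := by
  unfold Polynomial.reverse
  rw [natDegree_X_sub_C, reflect_sub, reflect_C b 1]
  have : reflect 1 (X : k[X]) = 1 := by
    rw [← pow_one (X : k[X]), reflect_monomial]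
    simp [revAt_le]
  rw [this]
  ring

lemma reverse_C' (c : k) : (C c).reverse = C c := by
  unfold Polynomial.reverse
  rw [natDegree_C]
  simpa using reflect_C c 0

lemma reverse_multiset_prod (s : Multiset k) :
    ((s.map fun b => X - C b).prod).reverse = (s.map fun b => 1 - C b * X).prod := by
  induction s using Multiset.induction_on with
  | empty => simp [Polynomial.reverse]
  | cons b s ih =>
    rw [Multiset.map_cons, Multiset.prod_cons, Multiset.map_cons, Multiset.prod_cons,
      Polynomial.reverse_mul_of_domain, reverse_X_sub_C', ih]

lemma one_sub_C_mul_X_eq (b : k) (hb : b ≠ 0) :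
    (1 : k[X]) - C b * X = C (-b) * (X - C b⁻¹) := by
  rw [mul_sub, ← C_mul, neg_mul, mul_inv_cancel₀ hb]
  simp [map_neg]
  ring

lemma one_sub_prod (s : Multiset k) (hs : ∀ b ∈ s, b ≠ 0) :
    (s.map fun b => 1 - C b * X).prod =
      C ((s.map fun b => -b).prod) * (s.map fun b => X - C b⁻¹).prod := by
  induction s using Multiset.induction_on with
  | empty => simp
  | cons b s ih =>
    have hb := hs b (Multiset.mem_cons_self _ _)
    rw [Multiset.map_cons, Multiset.prod_cons, Multiset.map_cons, Multiset.prod_cons,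
      Multiset.map_cons, Multiset.prod_cons, ih (fun r hr => hs r (Multiset.mem_cons_of_mem hr)),
      one_sub_C_mul_X_eq b hb, C_mul]
    ring

lemma reverse_map_of_injective {S : Type*} [Field S] (φ : k →+* S) (p : k[X]) :
    (p.map φ).reverse = p.reverse.map φ := by
  unfold Polynomial.reverse
  rw [natDegree_map_eq_of_injective φ.injective, reflect_map]

end Helpers

section MainLemma

variable {Ω Γ : Type*} [Field Ω] [IsAlgClosed Ω] [LinearOrderedCommGroupWithZero Γ]

set_option maxHeartbeats 1600000 in
lemma sepAlg_approx_mem (w : Valuation Ω Γ) (L : Subfield Ω)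
    (hLh : Subfield.IsHenselian w L) {x : Ω} (hx : SepAlgOver L x)
    (happ : ∀ γ : Γ, γ ≠ 0 → ∃ y ∈ L, w (x - y) < γ) : x ∈ L := by
  classical
  obtain ⟨f, hf0, hfc, hfsep, hfx⟩ := hx
  set M : Multiset Ω := f.roots with hMdef
  have hxM : x ∈ M := (mem_roots hf0).mpr hfx
  have hnodup : M.Nodup := nodup_roots hfsep
  set M' : Multiset Ω := M.erase x with hM'def
  have hMcons : x ::ₘ M' = M := Multiset.cons_erase hxM
  have hxM' : x ∉ M' := hnodup.notMem_erase
  have hsplit : f = C f.leadingCoeff * (M.map fun r => X - C r).prod :=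
    (IsAlgClosed.splits f).eq_prod_roots
  -- the threshold γm
  have hFne : (insert (1 : Γ) (M'.map fun r => w (x - r)).toFinset).Nonempty :=
    ⟨1, Finset.mem_insert_self _ _⟩
  set γm : Γ := (insert (1 : Γ) (M'.map fun r => w (x - r)).toFinset).min' hFne with hγm
  have hγle1 : γm ≤ 1 := Finset.min'_le _ _ (Finset.mem_insert_self _ _)
  have hγler : ∀ r ∈ M', γm ≤ w (x - r) := fun r hr =>
    Finset.min'_le _ _ (Finset.mem_insert_of_mem (Multiset.mem_toFinset.mpr
      (Multiset.mem_map_of_mem _ hr)))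
  have hxr0 : ∀ r ∈ M', w (x - r) ≠ 0 := by
    intro r hr h0
    rw [Valuation.zero_iff, sub_eq_zero] at h0
    exact hxM' (h0 ▸ hr)
  have hγ0 : γm ≠ 0 := by
    have hmem := Finset.min'_mem _ hFne
    rw [← hγm] at hmem
    rcases Finset.mem_insert.mp hmem with h1 | h2
    · rw [h1]; exact one_ne_zero
    · obtain ⟨r, hr, hrq⟩ := Multiset.mem_map.mp (Multiset.mem_toFinset.mp h2)
      rw [← hrq]
      exact hxr0 r hr
  -- first approximation y
  obtain ⟨y, hyL, hy⟩ := happ γm hγ0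
  by_cases hxy : x - y = 0
  · rw [sub_eq_zero] at hxy; rw [hxy]; exact hyL
  have hε0 : w (x - y) ≠ 0 := (Valuation.ne_zero_iff w).mpr hxy
  set ε : Γ := w (x - y) with hε
  have hεlt1 : ε < 1 := lt_of_lt_of_le hy hγle1
  have hεltr : ∀ r ∈ M', ε < w (x - r) := fun r hr => lt_of_lt_of_le hy (hγler r hr)
  -- second approximation (d ∈ L with w d = ε)
  obtain ⟨y', hy'L, hy'⟩ := happ ε hε0
  set d : Ω := y - y' with hd
  have hdL : d ∈ L := Subfield.sub_mem L hyL hy'L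
  have hwd : w d = ε := by
    have hid : d = (x - y') - (x - y) := by rw [hd]; ring
    rw [hid, Valuation.map_sub_eq_of_lt_right w hy']
  have hd0 : d ≠ 0 := by
    intro h
    rw [h, map_zero] at hwd
    exact hε0 hwd.symm
  -- third approximation z; u = z - y has w u = ε
  have hε2 : ε * ε ≠ 0 := mul_ne_zero hε0 hε0
  have hε2lt : ε * ε < ε := by
    calc ε * ε < ε * 1 := mul_lt_mul_of_pos_left hεlt1 (zero_lt_iff.mpr hε0)
    _ = ε := mul_one ε
  obtain ⟨z, hzL, hz⟩ := happ (ε * ε) hε2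
  have hzx : w (z - x) < ε * ε := by rw [w.map_sub_swap]; exact hz
  set u : Ω := z - y with hu
  have huL : u ∈ L := Subfield.sub_mem L hzL hyL
  have hwu : w u = ε := by
    have hid : u = (z - x) + (x - y) := by rw [hu]; ring
    rw [hid, Valuation.map_add_eq_of_lt_right w (lt_trans hzx hε2lt)]
  have hu0 : u ≠ 0 := by
    intro h
    rw [h, map_zero] at hwu
    exact hε0 hwu.symm
  -- θ and its approximation a in L
  set θ : Ω := d / (x - y) with hθ
  have hwθ : w θ = 1 := by rw [hθ, map_div₀, hwd, ← hε, div_self hε0]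
  have hθ0 : θ ≠ 0 := by
    intro h
    rw [h, map_zero] at hwθ
    exact zero_ne_one hwθ
  set a : Ω := d / u with haa
  have haL : a ∈ L := Subfield.div_mem L hdL huL
  have hida : θ - a = d * (z - x) / ((x - y) * u) := by
    have hzy : z - y ≠ 0 := hu0
    rw [hθ, haa, hu]
    field_simp
    ring
  have hwθa : w (θ - a) < ε := by
    rw [hida, map_div₀, Valuation.map_mul, Valuation.map_mul, hwd, hwu, ← hε]
    rw [div_lt_iff₀ (zero_lt_iff.mpr (mul_ne_zero hε0 hε0))]
    exact mul_lt_mul_of_pos_left hzx (zero_lt_iff.mpr hε0)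
  have hwθa1 : w (θ - a) < 1 := lt_trans hwθa hεlt1
  have hwaθ : w (a - θ) < 1 := by rw [w.map_sub_swap]; exact hwθa1
  have hwa : w a = 1 := by
    have h := Valuation.map_eq_of_sub_lt w (x := θ) (y := a) (by rw [hwθ]; exact hwaθ)
    rw [h, hwθ]
  -- the ρ map and its values
  set ρ : Ω → Ω := fun r => d / (r - y) with hρ
  have hρx : ρ x = θ := rfl
  have hwry : ∀ r ∈ M', w (r - y) = w (x - r) := by
    intro r hr
    have hid : r - y = (x - y) - (x - r) := by ring
    rw [hid, Valuation.map_sub_eq_of_lt_right w (hεltr r hr)]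
  have hry0 : ∀ r ∈ M, r - y ≠ 0 := by
    intro r hr
    rw [← hMcons, Multiset.mem_cons] at hr
    rcases hr with rfl | hr
    · exact hxy
    · intro h
      have h2 := hwry r hr
      rw [h, map_zero] at h2
      exact hxr0 r hr h2.symm
  have hρM'lt : ∀ r ∈ M', w (ρ r) < 1 := by
    intro r hr
    simp only [hρ]
    rw [map_div₀, hwd, hwry r hr]
    rw [div_lt_iff₀ (zero_lt_iff.mpr (hxr0 r hr)), one_mul]
    exact hεltr r hr
  have hρle1 : ∀ r ∈ M, w (ρ r) ≤ 1 := by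
    intro r hr
    rw [← hMcons, Multiset.mem_cons] at hr
    rcases hr with rfl | hr
    · rw [hρx, hwθ]
    · exact le_of_lt (hρM'lt r hr)
  -- lift f to L and build q₀, h₀
  have hfcs : (↑f.coeffs : Set Ω) ⊆ (L.toSubring : Set Ω) := by
    intro c hc
    obtain ⟨n, -, rfl⟩ := Polynomial.mem_coeffs_iff.mp (by exact_mod_cast hc)
    exact hfc n
  set f₀ : (↥L)[X] := f.toSubring L.toSubring hfcs with hf₀
  have hfmap : f₀.map L.subtype = f := Polynomial.map_toSubring f L.toSubring hfcs
  set yL : ↥L := ⟨y, hyL⟩ with hyLdef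
  set dL : ↥L := ⟨d, hdL⟩ with hdLdef
  set q₀ : (↥L)[X] := f₀.comp (C yL + C dL * X) with hq₀
  set q : Polynomial Ω := f.comp (C y + C d * X) with hq
  have hqmap : q₀.map L.subtype = q := by
    rw [hq₀, Polynomial.map_comp, hfmap, hq]
    congr 1
    simp only [Polynomial.map_add, Polynomial.map_mul, Polynomial.map_C, Polynomial.map_X]
    rfl
  set e₀ : ↥L := q₀.eval 0 with he₀
  set h₀ : (↥L)[X] := C e₀⁻¹ * q₀.reverse with hh₀
  set hΩ : Polynomial Ω := h₀.map L.subtype with hhΩ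
  -- identities over Ω
  set n : ℕ := Multiset.card M with hn
  set β : Ω → Ω := fun r => (r - y) / d with hβ
  have hβ0 : ∀ r ∈ M, β r ≠ 0 := fun r hr => div_ne_zero (hry0 r hr) hd0
  have hβinv : ∀ r, (β r)⁻¹ = ρ r := by
    intro r
    simp only [hβ, hρ]
    rw [inv_div]
  have hE1 : q = C (f.leadingCoeff * d ^ n) * (M.map fun r => X - C (β r)).prod := by
    rw [hq]
    conv_lhs => rw [hsplit]
    rw [mul_comp, C_comp, multiset_prod_comp, Multiset.map_map]
    have hmapeq : M.map ((fun p : Polynomial Ω => p.comp (C y + C d * X)) ∘ fun r => X - C r)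
        = M.map fun r => C d * (X - C (β r)) := by
      apply Multiset.map_congr rfl
      intro r hr
      simp only [Function.comp_apply, sub_comp, X_comp, C_comp, hβ]
      rw [mul_sub, ← C_mul, mul_div_cancel₀ _ hd0]
      simp only [C_sub]
      ring
    rw [hmapeq, Multiset.prod_map_mul, Multiset.map_const', Multiset.prod_replicate,
      ← C_pow, ← hn, ← mul_assoc, ← C_mul]
  have hprodβne : (M.map fun r => -(β r)).prod ≠ 0 := by
    intro h0
    obtain ⟨r, hr, hre⟩ := Multiset.mem_map.mp (Multiset.prod_eq_zero_iff.mp h0)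
    exact hβ0 r hr (neg_eq_zero.mp hre)
  have hE3 : q.eval 0 = f.leadingCoeff * d ^ n * (M.map fun r => -(β r)).prod := by
    rw [hE1, eval_mul, eval_C, eval_multiset_prod, Multiset.map_map]
    congr 2
    apply Multiset.map_congr rfl
    intro r hr
    simp
  have hqe0 : q.eval 0 ≠ 0 := by
    rw [hE3]
    exact mul_ne_zero (mul_ne_zero (leadingCoeff_ne_zero.mpr hf0) (pow_ne_zero _ hd0)) hprodβne
  have hE2 : q.reverse = C (f.leadingCoeff * d ^ n) *
      (C ((M.map fun r => -(β r)).prod) * (M.map fun r => X - C ((β r)⁻¹)).prod) := by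
    rw [hE1, Polynomial.reverse_mul_of_domain, reverse_C']
    rw [show (M.map fun r => X - C (β r)) = ((M.map β).map fun b => X - C b) by
      rw [Multiset.map_map]; rfl]
    rw [reverse_multiset_prod, one_sub_prod (M.map β) (by
      intro b hb
      obtain ⟨r, hr, rfl⟩ := Multiset.mem_map.mp hb
      exact hβ0 r hr)]
    rw [Multiset.map_map, Multiset.map_map]
    rfl
  have hιe₀ : L.subtype e₀ = q.eval 0 := by
    rw [he₀]
    have h := eval_map_hom L.subtype q₀ 0
    rw [hqmap] at h
    simpa using h
  have hΩeq : hΩ = (M.map fun r => X - C (ρ r)).prod := by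
    rw [hhΩ, hh₀, Polynomial.map_mul, Polynomial.map_C, map_inv₀]
    rw [show (q₀.reverse.map L.subtype) = q.reverse by
      rw [← reverse_map_of_injective L.subtype q₀, hqmap]]
    rw [hιe₀, hE2, hE3]
    rw [← mul_assoc, ← mul_assoc, ← C_mul, ← C_mul]
    rw [show ((f.leadingCoeff * d ^ n * (M.map fun r => -(β r)).prod)⁻¹ *
        (f.leadingCoeff * d ^ n) * (M.map fun r => -(β r)).prod) = 1 by
      rw [mul_assoc]
      exact inv_mul_cancel₀ (hE3 ▸ hqe0)]
    rw [C_1, one_mul]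
    refine congrArg Multiset.prod ?_
    apply Multiset.map_congr rfl
    intro r hr
    rw [hβinv r]
  -- properties of hΩ
  have hcoeffle : ∀ i, w (hΩ.coeff i) ≤ 1 := by
    intro i
    rw [hΩeq, show (M.map fun r => X - C (ρ r)) = ((M.map ρ).map fun b => X - C b) by
      rw [Multiset.map_map]; rfl]
    refine val_coeff_prod_le_one w (M.map ρ) ?_ i
    intro b hb
    obtain ⟨r, hr, rfl⟩ := Multiset.mem_map.mp hb
    exact hρle1 r hr
  have hmonic : hΩ.Monic := by
    rw [hΩeq]
    exact monic_multiset_prod_of_monic _ _ (fun r _ => monic_X_sub_C _)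
  have hevalθ : hΩ.eval θ = 0 := by
    rw [hΩeq, eval_multiset_prod, Multiset.map_map]
    apply Multiset.prod_eq_zero
    refine Multiset.mem_map.mpr ⟨x, hxM, ?_⟩
    simp [hρx]
  have hderivθ : w (hΩ.derivative.eval θ) = 1 := by
    have hHsplit : hΩ = (X - C θ) * (M'.map fun r => X - C (ρ r)).prod := by
      rw [hΩeq, ← hMcons, Multiset.map_cons, Multiset.prod_cons, hρx]
    rw [hHsplit, derivative_mul, derivative_sub, derivative_X, derivative_C, sub_zero,
      one_mul, eval_add, eval_mul, eval_sub, eval_X, eval_C, sub_self, zero_mul, add_zero]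
    rw [eval_multiset_prod, Multiset.map_map]
    have hmapone : M'.map ((eval θ) ∘ fun r => X - C (ρ r)) = M'.map fun r => θ - ρ r := by
      apply Multiset.map_congr rfl
      intro r hr
      simp
    rw [hmapone]
    have hval : w ((M'.map fun r => θ - ρ r).prod) =
        ((M'.map fun r => θ - ρ r).map w).prod :=
      map_multiset_prod (w.toMonoidWithZeroHom.toMonoidHom) _
    rw [hval, Multiset.map_map]
    have : M'.map (⇑w ∘ fun r => θ - ρ r) = M'.map fun _ => (1 : Γ) := by
      apply Multiset.map_congr rfl
      intro r hr
      simp only [Function.comp_apply]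
      rw [Valuation.map_sub_eq_of_lt_left w (by rw [hwθ]; exact hρM'lt r hr), hwθ]
    rw [this, Multiset.map_const', Multiset.prod_replicate, one_pow]
  have hevala : w (hΩ.eval a) < 1 := by
    have hid : hΩ.eval a = hΩ.eval a - hΩ.eval θ := by rw [hevalθ, sub_zero]
    rw [hid]
    exact lt_of_le_of_lt (val_eval_sub_le w hΩ hcoeffle (le_of_eq hwa) (le_of_eq hwθ)) hwaθ
  have hderiva : w (hΩ.derivative.eval a) = 1 := by
    have hle := val_eval_sub_le w hΩ.derivative (val_coeff_derivative_le_one w hΩ hcoeffle)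
      (le_of_eq hwa) (le_of_eq hwθ)
    have hlt : w (hΩ.derivative.eval a - hΩ.derivative.eval θ) < w (hΩ.derivative.eval θ) := by
      rw [hderivθ]
      exact lt_of_le_of_lt hle hwaθ
    have h := Valuation.map_eq_of_sub_lt w hlt
    rw [h, hderivθ]
  -- lift h₀ to the valuation subring R of L and apply Hensel's lemma
  have hLh' : HenselianLocalRing (w.comap L.subtype).valuationSubring := hLh
  have hcoefmem : (↑h₀.coeffs : Set ↥L) ⊆
      ((w.comap L.subtype).valuationSubring.toSubring : Set ↥L) := by
    intro c hc
    obtain ⟨i, -, rfl⟩ := Polynomial.mem_coeffs_iff.mp (by exact_mod_cast hc)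
    show (w.comap L.subtype) (h₀.coeff i) ≤ 1
    have hcc : (L.subtype) (h₀.coeff i) = hΩ.coeff i := by
      rw [hhΩ, Polynomial.coeff_map]
    show w ((L.subtype) (h₀.coeff i)) ≤ 1
    rw [hcc]
    exact hcoeffle i
  set R := (w.comap L.subtype).valuationSubring with hR
  set h₁ := h₀.toSubring R.toSubring hcoefmem with hh₁
  have hmap₁ : h₁.map R.toSubring.subtype = h₀ :=
    Polynomial.map_toSubring h₀ R.toSubring hcoefmem
  have hinj : Function.Injective ⇑(L.subtype) := Subtype.val_injective
  have hmonic₀ : h₀.Monic := by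
    have hm := hmonic
    rw [hhΩ] at hm
    exact (Function.Injective.monic_map_iff hinj).mpr hm
  have hmonic₁ : h₁.Monic := (Polynomial.monic_toSubring _ _ _).mpr hmonic₀
  set aL : ↥L := ⟨a, haL⟩ with haL'
  have haR : aL ∈ R.toSubring := by
    show (w.comap L.subtype) aL ≤ 1
    show w (L.subtype aL) ≤ 1
    exact le_of_eq hwa
  set a₀ : ↥R := ⟨aL, haR⟩ with ha₀
  -- transfer of evaluations
  have hevtrans : ∀ (p₁ : (↥R)[X]) (t : ↥R),
      L.subtype (R.toSubring.subtype (p₁.eval t)) =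
        ((p₁.map R.toSubring.subtype).map L.subtype).eval (L.subtype (R.toSubring.subtype t)) := by
    intro p₁ t
    rw [eval_map_hom R.toSubring.subtype p₁ t, eval_map_hom L.subtype _ _]
  have hcond1 : h₁.eval a₀ ∈ IsLocalRing.maximalIdeal R := by
    refine (mem_maximalIdeal_iff_val_lt_one (w.comap L.subtype) _).mpr ?_
    show w (L.subtype (R.toSubring.subtype (h₁.eval a₀))) < 1
    rw [hevtrans h₁ a₀, hmap₁, ← hhΩ]
    exact hevala
  have hcond2 : IsUnit (h₁.derivative.eval a₀) := by
    refine (isUnit_iff_val_eq_one (w.comap L.subtype) _).mpr ?_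
    show w (L.subtype (R.toSubring.subtype (h₁.derivative.eval a₀))) = 1
    rw [hevtrans h₁.derivative a₀]
    rw [← Polynomial.derivative_map, hmap₁, ← Polynomial.derivative_map, ← hhΩ]
    exact hderiva
  obtain ⟨b₁, hb₁root, hb₁near⟩ := hLh'.is_henselian h₁ hmonic₁ a₀ hcond1 hcond2
  set bL : ↥L := R.toSubring.subtype b₁ with hbLdef
  set b : Ω := L.subtype bL with hbdef
  have hbL : b ∈ L := (bL).2
  have hrootb : hΩ.eval b = 0 := by
    have h := hevtrans h₁ b₁
    rw [hmap₁, ← hhΩ] at h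
    rw [hbdef, hbLdef, ← h]
    rw [show h₁.eval b₁ = 0 from hb₁root, map_zero, map_zero]
  have hba : w (b - a) < 1 := by
    have h := (mem_maximalIdeal_iff_val_lt_one (w.comap L.subtype) _).mp hb₁near
    have hco : ((b₁ - a₀ : ↥R) : ↥L) = bL - aL := rfl
    have : w (L.subtype (bL - aL)) < 1 := by
      rw [← hco]
      exact h
    rw [RingHom.map_sub] at this
    exact this
  have hbθ : w (b - θ) < 1 := by
    have hid : b - θ = (b - a) + (a - θ) := by ring
    rw [hid]
    exact lt_of_le_of_lt (w.map_add _ _) (max_lt hba hwaθ)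
  -- identify the root
  have hroot' : ∃ r ∈ M, b = ρ r := by
    have h0 : ((M.map fun r => b - ρ r)).prod = 0 := by
      have h := hrootb
      rw [hΩeq, eval_multiset_prod, Multiset.map_map] at h
      rw [show M.map ((eval b) ∘ fun r => X - C (ρ r)) = M.map fun r => b - ρ r from
        Multiset.map_congr rfl (by intro r hr; simp)] at h
      exact h
    obtain ⟨t, ht, hteq⟩ := Multiset.mem_map.mp (Multiset.prod_eq_zero_iff.mp h0)
    exact ⟨t, ht, by rw [← sub_eq_zero]; exact hteq⟩
  obtain ⟨r, hrM, hbρ⟩ := hroot'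
  rw [← hMcons, Multiset.mem_cons] at hrM
  rcases hrM with hrx | hrM'
  · rw [hrx, hρx] at hbρ
    have hdθ : d / θ = x - y := by
      rw [hθ]
      rw [div_div_eq_mul_div, mul_comm, mul_div_assoc, div_self hd0, mul_one]
    have hxval : x = d / θ + y := by rw [hdθ]; ring
    rw [hxval]
    exact Subfield.add_mem L (Subfield.div_mem L hdL (hbρ ▸ hbL)) hyL
  · exfalso
    have h1 : w (b - θ) = 1 := by
      rw [hbρ, Valuation.map_sub_eq_of_lt_right w (by rw [hwθ]; exact hρM'lt r hrM'), hwθ]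
    rw [h1] at hbθ
    exact lt_irrefl 1 hbθ

end MainLemma

/-- Let (K,v) be a henselian valued field and (F|K,v) a valued function
field which is a separable subextension of the completion K^c of (K,v); being
contained in the completion is expressed by: every element of F can be approximated
by elements of K to any prescribed precision.  Then for every separating
transcendence basis T of F|K, F is contained in the henselization of (K(T),v). -/
theorem stmt7 {Ω Γ : Type*} [Field Ω] [IsAlgClosed Ω] [LinearOrderedCommGroupWithZero Γ]
    (w : Valuation Ω Γ) (K F : Subfield Ω) (hKF : K ≤ F)
    (hhens : Subfield.IsHenselian w K)
    (hfg : ∃ s : Finset Ω, F = Subfield.closure ((K : Set Ω) ∪ ↑s))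
    (hcomp : ∀ x ∈ F, ∀ γ : Γ, γ ≠ 0 → ∃ y ∈ K, w (x - y) < γ)  -- F ⊆ K^c
    : ∀ T : Set Ω, IsSepTranscBasis K F T →
      F ≤ henselization w (Subfield.closure ((K : Set Ω) ∪ T)) := by
  intro T hT
  refine le_sInf ?_
  rintro L ⟨hKTL, hLhen⟩
  intro x hxF
  obtain ⟨f, hf0, hfc, hsep, hev⟩ := hT.2.2 x hxF
  refine sepAlg_approx_mem w L hLhen ⟨f, hf0, fun i => hKTL (hfc i), hsep, hev⟩ ?_
  intro γ hγ
  obtain ⟨y, hyK, hyv⟩ := hcomp x hxF γ hγ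
  exact ⟨y, hKTL (Subfield.subset_closure (Or.inl hyK)), hyv⟩
end

section
/- Let (L,P) be a valued field where the place P is the composition Q₁Q₂ of a place Q₁ on L and a place Q₂ on the residue field LQ₁. Then an extension (L'|L,P) is immediate if and only if v_{Q₁}L' = v_{Q₁}L and the residue field extension (L'Q₁|LQ₁, Q₂) is immediate. -/
/-- The extension (Ω|L) of valued fields is immediate with respect to the valuation
(sub)ring O of Ω: every value of Ω is realized in L (x and y have the same value iff
x/y and y/x both lie in O), and every residue of Ω is realized in L (x - y lies in
the maximal ideal of O, i.e. x - y ∈ O and x - y is a nonunit of O). -/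
def ImmediateOver {F : Type*} [Field F] (O : ValuationSubring F) (L : Subfield F) : Prop :=
  (∀ x : F, x ≠ 0 → ∃ y ∈ L, y ≠ 0 ∧ x * y⁻¹ ∈ O ∧ y * x⁻¹ ∈ O) ∧
  (∀ x ∈ O, ∃ y ∈ L, (x - y) ∈ O ∧ (x - y ≠ 0 → (x - y)⁻¹ ∉ O))

/-- The residue field L Q₁ of the subfield L with respect to the valuation ring O₁,
as a subfield of the residue field of O₁. -/
noncomputable def resSubfield {F : Type*} [Field F] (O₁ : ValuationSubring F) (L : Subfield F) :
    Subfield (IsLocalRing.ResidueField O₁) :=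
  Subfield.closure (IsLocalRing.residue O₁ '' {a : O₁ | (a : F) ∈ L})

section Aux

variable {Ω : Type*} [Field Ω] (O₁ : ValuationSubring Ω)

lemma aux_res_mul_inv {z : Ω} (hz : z ∈ O₁) (hz' : z⁻¹ ∈ O₁) (hz0 : z ≠ 0) :
    IsLocalRing.residue O₁ ⟨z, hz⟩ * IsLocalRing.residue O₁ ⟨z⁻¹, hz'⟩ = 1 := by
  rw [← map_mul, ← map_one (IsLocalRing.residue O₁)]
  congr 1
  ext
  exact mul_inv_cancel₀ hz0

lemma aux_res_inv {z : Ω} (hz : z ∈ O₁) (hz' : z⁻¹ ∈ O₁) (hz0 : z ≠ 0) :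
    IsLocalRing.residue O₁ ⟨z⁻¹, hz'⟩ = (IsLocalRing.residue O₁ ⟨z, hz⟩)⁻¹ :=
  eq_inv_of_mul_eq_one_left (by rw [mul_comm]; exact aux_res_mul_inv O₁ hz hz' hz0)

lemma aux_res_ne_zero {z : Ω} (hz : z ∈ O₁) (hz' : z⁻¹ ∈ O₁) (hz0 : z ≠ 0) :
    IsLocalRing.residue O₁ ⟨z, hz⟩ ≠ 0 :=
  left_ne_zero_of_mul_eq_one (aux_res_mul_inv O₁ hz hz' hz0)

lemma aux_isUnit_iff {z : Ω} (hz : z ∈ O₁) (hz0 : z ≠ 0) :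
    IsUnit (⟨z, hz⟩ : O₁) ↔ z⁻¹ ∈ O₁ := by
  constructor
  · intro hu
    obtain ⟨a, ha⟩ := isUnit_iff_exists_inv.mp hu
    have ha' : z * (a : Ω) = 1 := congrArg Subtype.val ha
    have : z⁻¹ = (a : Ω) := inv_eq_of_mul_eq_one_right ha'
    rw [this]; exact a.2
  · intro hinv
    refine isUnit_iff_exists_inv.mpr ⟨⟨z⁻¹, hinv⟩, ?_⟩
    ext
    exact mul_inv_cancel₀ hz0

lemma aux_inv_mem_of_res_ne_zero {z : Ω} (hz : z ∈ O₁)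
    (h : IsLocalRing.residue O₁ ⟨z, hz⟩ ≠ 0) : z⁻¹ ∈ O₁ := by
  have hz0 : z ≠ 0 := by
    rintro rfl
    exact h (by rw [show (⟨(0:Ω), hz⟩ : O₁) = 0 from rfl, map_zero])
  have := (IsLocalRing.residue_ne_zero_iff_isUnit _).mp h
  exact (aux_isUnit_iff O₁ hz hz0).mp this

lemma aux_inv_not_mem {z : Ω} (hz : z ∈ O₁) (hz0 : z ≠ 0)
    (h : IsLocalRing.residue O₁ ⟨z, hz⟩ = 0) : z⁻¹ ∉ O₁ := by
  intro hz'
  exact aux_res_ne_zero O₁ hz hz' hz0 h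

variable (L : Subfield Ω)

lemma aux_mem_res (a : O₁) (ha : (a : Ω) ∈ L) :
    IsLocalRing.residue O₁ a ∈ resSubfield O₁ L :=
  Subfield.subset_closure ⟨a, ha, rfl⟩

/-- The image of `L ∩ O₁` under the residue map, as a subfield. -/
noncomputable def auxS : Subfield (IsLocalRing.ResidueField O₁) where
  carrier := IsLocalRing.residue O₁ '' {a : O₁ | (a : Ω) ∈ L}
  zero_mem' := ⟨0, by simpa using L.zero_mem, map_zero _⟩
  one_mem' := ⟨1, by simpa using L.one_mem, map_one _⟩
  add_mem' := by
    rintro _ _ ⟨a, ha, rfl⟩ ⟨b, hb, rfl⟩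
    exact ⟨a + b, by simpa using add_mem ha hb, map_add _ _ _⟩
  mul_mem' := by
    rintro _ _ ⟨a, ha, rfl⟩ ⟨b, hb, rfl⟩
    exact ⟨a * b, by simpa using mul_mem ha hb, map_mul _ _ _⟩
  neg_mem' := by
    rintro _ ⟨a, ha, rfl⟩
    exact ⟨-a, by simpa using L.neg_mem ha, map_neg _ _⟩
  inv_mem' := by
    rintro _ ⟨a, ha, rfl⟩
    by_cases h0 : IsLocalRing.residue O₁ a = 0
    · rw [h0, inv_zero]
      exact ⟨0, by simpa using L.zero_mem, map_zero _⟩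
    · have ha2 : (⟨(a : Ω), a.2⟩ : O₁) = a := rfl
      rw [← ha2] at h0
      have hinv : (a : Ω)⁻¹ ∈ O₁ := aux_inv_mem_of_res_ne_zero O₁ a.2 h0
      have hz0 : (a : Ω) ≠ 0 := by
        rintro hz
        exact h0 (by rw [show (⟨(a:Ω), a.2⟩ : O₁) = 0 from Subtype.ext hz, map_zero])
      refine ⟨⟨(a : Ω)⁻¹, hinv⟩, show ((a:Ω))⁻¹ ∈ L from inv_mem ha, ?_⟩
      rw [aux_res_inv O₁ a.2 hinv hz0, ha2]

lemma aux_res_exists {η : IsLocalRing.ResidueField O₁} (hη : η ∈ resSubfield O₁ L) :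
    ∃ b : O₁, (b : Ω) ∈ L ∧ IsLocalRing.residue O₁ b = η := by
  have : resSubfield O₁ L ≤ auxS O₁ L :=
    (Subfield.closure_le).mpr (fun x hx => hx)
  obtain ⟨b, hb, rfl⟩ := this hη
  exact ⟨b, hb, rfl⟩

end Aux

/-- Let (Ω,P) be a valued field where the place P is the composition
Q₁Q₂, i.e. the valuation ring O_P of P is the preimage, under the residue map of the
valuation ring O₁ of Q₁, of the valuation ring O₂ of Q₂ on the residue field ΩQ₁.
Then for a subfield L of Ω, the extension (Ω|L,P) is immediate if and only if
v_{Q₁}Ω = v_{Q₁}L and the residue field extension (ΩQ₁ | LQ₁, Q₂) is immediate. -/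
theorem stmt10 {Ω : Type*} [Field Ω] (L : Subfield Ω)
    (O₁ OP : ValuationSubring Ω)
    (O₂ : ValuationSubring (IsLocalRing.ResidueField O₁))
    (hcomp : ∀ x : Ω, x ∈ OP ↔ ∃ hx : x ∈ O₁, IsLocalRing.residue O₁ ⟨x, hx⟩ ∈ O₂) :
    ImmediateOver OP L ↔
      ((∀ x : Ω, x ≠ 0 → ∃ y ∈ L, y ≠ 0 ∧ x * y⁻¹ ∈ O₁ ∧ y * x⁻¹ ∈ O₁) ∧
        ImmediateOver O₂ (resSubfield O₁ L)) := by
  set π := IsLocalRing.residue O₁ with hπ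
  have hOP₁ : ∀ x : Ω, x ∈ OP → x ∈ O₁ := fun x hx => ((hcomp x).mp hx).choose
  have hOPres : ∀ (x : Ω) (hx : x ∈ O₁), x ∈ OP → π ⟨x, hx⟩ ∈ O₂ := by
    intro x hx hxP
    obtain ⟨h', hres⟩ := (hcomp x).mp hxP
    exact hres
  constructor
  · rintro ⟨hv, hr⟩
    refine ⟨?_, ?_, ?_⟩
    · -- value groups agree at the level of O₁
      intro x hx
      obtain ⟨y, hyL, hy0, h1, h2⟩ := hv x hx
      exact ⟨y, hyL, hy0, hOP₁ _ h1, hOP₁ _ h2⟩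
    · -- values of the residue field extension
      intro ξ hξ
      obtain ⟨x, rfl⟩ := IsLocalRing.residue_surjective ξ
      have hxinv : (x : Ω)⁻¹ ∈ O₁ := aux_inv_mem_of_res_ne_zero O₁ x.2 hξ
      have hx0 : (x : Ω) ≠ 0 := by
        rintro h0
        exact hξ (by rw [show x = 0 from Subtype.ext h0, map_zero])
      obtain ⟨y, hyL, hy0, h1, h2⟩ := hv (x : Ω) hx0
      have h1' : (x : Ω) * y⁻¹ ∈ O₁ := hOP₁ _ h1
      have h2' : y * (x : Ω)⁻¹ ∈ O₁ := hOP₁ _ h2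
      have hy₁ : y ∈ O₁ := by
        have := mul_mem h2' x.2
        rwa [inv_mul_cancel_right₀ hx0] at this
      have hyinv : y⁻¹ ∈ O₁ := by
        have := mul_mem h1' hxinv
        rwa [mul_comm (x : Ω) y⁻¹, mul_assoc, mul_inv_cancel₀ hx0, mul_one] at this
      refine ⟨π ⟨y, hy₁⟩, aux_mem_res O₁ L ⟨y, hy₁⟩ hyL,
        aux_res_ne_zero O₁ hy₁ hyinv hy0, ?_, ?_⟩
      · have : π x * (π ⟨y, hy₁⟩)⁻¹ = π ⟨(x : Ω) * y⁻¹, mul_mem x.2 hyinv⟩ := by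
          rw [← aux_res_inv O₁ hy₁ hyinv hy0, ← map_mul]
          exact congrArg π (Subtype.ext rfl)
        rw [this]
        exact hOPres _ _ h1
      · have e1 : π ⟨(x : Ω)⁻¹, hxinv⟩ = (π x)⁻¹ := aux_res_inv O₁ x.2 hxinv hx0
        have : π ⟨y, hy₁⟩ * (π x)⁻¹ = π ⟨y * (x : Ω)⁻¹, mul_mem hy₁ hxinv⟩ := by
          rw [← e1, ← map_mul]
          exact congrArg π (Subtype.ext rfl)
        rw [this]
        exact hOPres _ _ h2
    · -- residues of the residue field extension
      intro ξ hξ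
      obtain ⟨x, rfl⟩ := IsLocalRing.residue_surjective ξ
      have hxP : (x : Ω) ∈ OP := (hcomp _).mpr ⟨x.2, hξ⟩
      obtain ⟨y, hyL, hsub, himp⟩ := hr (x : Ω) hxP
      have hz₁ : (x : Ω) - y ∈ O₁ := hOP₁ _ hsub
      have hy₁ : y ∈ O₁ := by
        have := sub_mem x.2 hz₁
        simpa using this
      have heq : π x - π ⟨y, hy₁⟩ = π ⟨(x : Ω) - y, hz₁⟩ :=
        (map_sub π x ⟨y, hy₁⟩).symm
      refine ⟨π ⟨y, hy₁⟩, aux_mem_res O₁ L ⟨y, hy₁⟩ hyL, ?_, ?_⟩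
      · rw [heq]
        exact hOPres _ _ hsub
      · intro hne hmem
        rw [heq] at hne hmem
        have hz0 : (x : Ω) - y ≠ 0 := by
          rintro h0
          exact hne (by rw [show (⟨(x:Ω) - y, hz₁⟩ : O₁) = 0 from Subtype.ext h0, map_zero])
        have hzinv : ((x : Ω) - y)⁻¹ ∈ O₁ := aux_inv_mem_of_res_ne_zero O₁ hz₁ hne
        have : ((x : Ω) - y)⁻¹ ∈ OP := (hcomp _).mpr ⟨hzinv, by
          rw [aux_res_inv O₁ hz₁ hzinv hz0]; exact hmem⟩
        exact himp hz0 this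
  · rintro ⟨hv₁, hv₂, hr₂⟩
    constructor
    · -- value part
      intro x hx
      obtain ⟨y, hyL, hy0, h1, h2⟩ := hv₁ x hx
      have hu0 : x * y⁻¹ ≠ 0 := by
        apply mul_ne_zero hx (inv_ne_zero hy0)
      have huinv : (x * y⁻¹)⁻¹ = y * x⁻¹ := by
        rw [mul_inv, inv_inv, mul_comm]
      have h2'' : (x * y⁻¹)⁻¹ ∈ O₁ := by rw [huinv]; exact h2
      have hξ : π ⟨x * y⁻¹, h1⟩ ≠ 0 := aux_res_ne_zero O₁ h1 h2'' hu0
      obtain ⟨η, hηmem, hη0, hξη, hηξ⟩ := hv₂ (π ⟨x * y⁻¹, h1⟩) hξ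
      obtain ⟨b, hbL, rfl⟩ := aux_res_exists O₁ L hηmem
      have hbinv : (b : Ω)⁻¹ ∈ O₁ := aux_inv_mem_of_res_ne_zero O₁ b.2 hη0
      have hb0 : (b : Ω) ≠ 0 := by
        rintro h0
        exact hη0 (by rw [show b = 0 from Subtype.ext h0, map_zero])
      have e1 : π ⟨(b : Ω)⁻¹, hbinv⟩ = (π b)⁻¹ := aux_res_inv O₁ b.2 hbinv hb0
      refine ⟨y * (b : Ω), mul_mem hyL hbL, mul_ne_zero hy0 hb0, ?_, ?_⟩
      · have hval : x * (y * (b : Ω))⁻¹ = (x * y⁻¹) * (b : Ω)⁻¹ := by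
          rw [mul_inv]; ring
        rw [hval]
        refine (hcomp _).mpr ⟨mul_mem h1 hbinv, ?_⟩
        have : π ⟨(x * y⁻¹) * (b : Ω)⁻¹, mul_mem h1 hbinv⟩
            = π ⟨x * y⁻¹, h1⟩ * (π b)⁻¹ := by
          rw [← e1, ← map_mul]
          exact congrArg π (Subtype.ext rfl)
        rw [this]
        exact hξη
      · have hval : (y * (b : Ω)) * x⁻¹ = ((x * y⁻¹)⁻¹) * (b : Ω) := by
          rw [huinv]; ring
        rw [hval]
        have huinv₁ : (x * y⁻¹)⁻¹ ∈ O₁ := h2''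
        refine (hcomp _).mpr ⟨mul_mem huinv₁ b.2, ?_⟩
        have : π ⟨(x * y⁻¹)⁻¹ * (b : Ω), mul_mem huinv₁ b.2⟩
            = (π ⟨x * y⁻¹, h1⟩)⁻¹ * π b := by
          rw [← aux_res_inv O₁ h1 huinv₁ hu0, ← map_mul]
          exact congrArg π (Subtype.ext rfl)
        rw [this, mul_comm]
        exact hηξ
    · -- residue part
      intro x hxP
      obtain ⟨hx₁, hξ⟩ := (hcomp x).mp hxP
      obtain ⟨η, hηmem, hsub, himp₂⟩ := hr₂ (π ⟨x, hx₁⟩) hξ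
      obtain ⟨b, hbL, rfl⟩ := aux_res_exists O₁ L hηmem
      have hz₁ : x - (b : Ω) ∈ O₁ := sub_mem hx₁ b.2
      have heq : π ⟨x, hx₁⟩ - π b = π ⟨x - (b : Ω), hz₁⟩ := by
        rw [← map_sub]
        rfl
      rw [heq] at hsub himp₂
      refine ⟨(b : Ω), hbL, (hcomp _).mpr ⟨hz₁, hsub⟩, ?_⟩
      intro hz0 hmemP
      obtain ⟨hzinv, hres⟩ := (hcomp _).mp hmemP
      by_cases h0 : π ⟨x - (b : Ω), hz₁⟩ = 0
      · exact aux_inv_not_mem O₁ hz₁ hz0 h0 hzinv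
      · have : π ⟨(x - (b : Ω))⁻¹, hzinv⟩ = (π ⟨x - (b : Ω), hz₁⟩)⁻¹ :=
          aux_res_inv O₁ hz₁ hzinv hz0
        rw [this] at hres
        exact himp₂ h0 hres
end

section
/- Let (L,P) be a valued field with P = Q₁Q₂ a composition of places. Then (L,P) is henselian if and only if both (L,Q₁) and (LQ₁,Q₂) are henselian. -/
open Polynomial IsLocalRing

set_option maxHeartbeats 1000000
set_option synthInstance.maxHeartbeats 400000

theorem eval_map_hom' {R S : Type*} [CommRing R] [CommRing S] (φ : R →+* S) (p : Polynomial R)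
    (x : R) : (p.map φ).eval (φ x) = φ (p.eval x) := by
  rw [Polynomial.eval_map, Polynomial.eval₂_at_apply]

section Aux

variable {L : Type*} [Field L]

/-- Auxiliary: coarsening of a henselian valuation is henselian.  `OP ⊆ O₁` are valuation
subrings with the maximal ideal of `O₁` contained in `OP` (and hence in the maximal ideal
of `OP`). -/
theorem aux_coarsening (O₁ OP : ValuationSubring L) (hle : OP ≤ O₁)
    (hm₁P : ∀ y : O₁, y ∈ maximalIdeal O₁ → (y : L) ∈ OP)
    (hmono : ∀ x : OP, (OP.inclusion O₁ hle) x ∈ maximalIdeal O₁ → x ∈ maximalIdeal OP)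
    (hP : HenselianLocalRing OP) : HenselianLocalRing O₁ := by
  classical
  set ι : OP →+* O₁ := OP.inclusion O₁ hle with hιdef
  refine { is_henselian := ?_ }
  intro f hf b h₁ h₂
  -- the degree is positive
  have hn0 : f.natDegree ≠ 0 := by
    intro h
    rw [hf.natDegree_eq_zero.1 h] at h₁
    simp only [Polynomial.eval_one] at h₁
    exact mem_nonunits_iff.1 ((mem_maximalIdeal _).1 h₁) isUnit_one
  set N := f.natDegree with hNdef
  obtain ⟨m, hNm⟩ : ∃ m, N = m + 1 := ⟨N - 1, (Nat.succ_pred_eq_of_pos (Nat.pos_of_ne_zero hn0)).symm⟩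
  obtain ⟨u, hu⟩ := h₂
  set v : O₁ := ((u⁻¹ : O₁ˣ) : O₁) with hv
  have huv : f.derivative.eval b * v = 1 := by rw [← hu]; exact u.mul_inv
  set F := Polynomial.taylor b f with hF
  set c : ℕ → O₁ := fun i => F.coeff i with hc
  have hc0 : c 0 = f.eval b := Polynomial.taylor_coeff_zero b f
  have hc1 : c 1 = f.derivative.eval b := Polynomial.taylor_coeff_one b f
  set g : ℕ → O₁ := fun i => c i * f.eval b ^ (i - 1) * v ^ i with hg
  have hg1 : g 1 = 1 := by
    simp only [hg, pow_one, Nat.sub_self, pow_zero, mul_one, one_mul, hc1]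
    exact huv
  have hgm : ∀ i, i ≠ 1 → g i ∈ maximalIdeal O₁ := by
    intro i hi
    rcases i with _ | _ | i
    · rw [show g 0 = f.eval b by simp [hg, hc0]]
      exact h₁
    · exact absurd rfl hi
    · exact Ideal.mul_mem_right _ _ (Ideal.mul_mem_left _ _
        (Ideal.pow_mem_of_mem _ h₁ _ (by omega)))
  have hgOP : ∀ i, ((g i : O₁) : L) ∈ OP := by
    intro i
    by_cases hi : i = 1
    · rw [hi, hg1]; exact OP.one_mem
    · exact hm₁P _ (hgm i hi)
  set E : ℕ → OP := fun i => if i = 0 then 1 else ⟨((g i : O₁) : L), hgOP i⟩ with hE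
  have hE0 : E 0 = 1 := by simp [hE]
  have hE1 : E 1 = 1 := by
    apply Subtype.ext
    simp [hE, hg1]
  have hEι : ∀ i, i ≠ 0 → ι (E i) = g i := by
    intro i hi
    have hEi : E i = ⟨((g i : O₁) : L), hgOP i⟩ := by simp [hE, hi]
    rw [hEi]
    exact Subtype.ext rfl
  have hEm : ∀ i, i ≠ 0 → i ≠ 1 → E i ∈ maximalIdeal OP := by
    intro i h0 h1
    exact hmono _ (by rw [hEι i h0]; exact hgm i h1)
  -- the key coercion identity for E
  have hEC : ∀ i, ((E i : OP) : L) * ((f.eval b : O₁) : L) =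
      ((c i : O₁) : L) * (((f.eval b * v : O₁) : L)) ^ i := by
    intro i
    rcases i with _ | j
    · simp [hE0, hc0]
    · have h1 : ((E (j + 1) : OP) : L) = ((g (j + 1) : O₁) : L) := by simp [hE]
      rw [h1]
      have : ((g (j + 1) : O₁) : L) = ((c (j+1) : O₁) : L) *
          (((f.eval b : O₁)) : L) ^ (j) * (((v : O₁)) : L) ^ (j+1) := by
        simp [hg]
      rw [this]
      push_cast
      ring
  -- the monic polynomial over OP
  set H : Polynomial OP := ∑ i ∈ Finset.range (N + 1), Polynomial.C (E i) * Polynomial.X ^ (N - i)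
    with hH
  have hHdeg : H.natDegree ≤ N := by
    apply Polynomial.natDegree_sum_le_of_forall_le
    intro i _
    refine (Polynomial.natDegree_C_mul_le _ _).trans ?_
    rw [Polynomial.natDegree_X_pow]
    omega
  have hHcoeff : H.coeff N = 1 := by
    rw [hH, Polynomial.finset_sum_coeff]
    simp only [Polynomial.coeff_C_mul, Polynomial.coeff_X_pow]
    rw [Finset.sum_eq_single 0]
    · simp [hE0]
    · intro i hi hne
      have hi' := Finset.mem_range.1 hi
      have : ¬(N = N - i) := by omega
      simp [this]
    · intro h; simp at h
  have hHmonic : H.Monic := Polynomial.monic_of_natDegree_le_of_coeff_eq_one N hHdeg hHcoeff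
  have hsplit : Finset.range (N + 1) = insert 0 (insert 1 (Finset.Icc 2 N)) := by
    ext x
    simp only [Finset.mem_range, Finset.mem_insert, Finset.mem_Icc]
    omega
  have h0notin : (0 : ℕ) ∉ insert 1 (Finset.Icc 2 N) := by simp
  have h1notin : (1 : ℕ) ∉ Finset.Icc 2 N := by simp
  -- H(-1) ∈ m_P
  have hHeval : H.eval (-1) ∈ maximalIdeal OP := by
    have h1 : H.eval (-1) = ∑ i ∈ Finset.range (N + 1), E i * (-1) ^ (N - i) := by
      rw [hH, Polynomial.eval_finset_sum]
      refine Finset.sum_congr rfl fun i _ => ?_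
      simp
    rw [h1, hsplit, Finset.sum_insert h0notin, Finset.sum_insert h1notin, hE0, hE1, one_mul,
      one_mul]
    have h2 : ((-1 : OP)) ^ (N - 0) + (-1) ^ (N - 1) = 0 := by
      rw [hNm]
      simp [pow_succ]
    rw [← add_assoc, h2, zero_add]
    exact Ideal.sum_mem _ fun i hi => by
      have hi' := Finset.mem_Icc.1 hi
      exact Ideal.mul_mem_right _ _ (hEm i (by omega) (by omega))
  -- H'(-1) is a unit
  have hHder : IsUnit (H.derivative.eval (-1)) := by
    have hderiv : H.derivative = ∑ i ∈ Finset.range (N + 1),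
        Polynomial.C (E i * ((N - i : ℕ) : OP)) * Polynomial.X ^ (N - i - 1) := by
      rw [hH, Polynomial.derivative_sum]
      exact Finset.sum_congr rfl fun i _ => by
        rw [Polynomial.derivative_C_mul_X_pow]
    have h1 : H.derivative.eval (-1) =
        ∑ i ∈ Finset.range (N + 1), E i * ((N - i : ℕ) : OP) * (-1) ^ (N - i - 1) := by
      rw [hderiv, Polynomial.eval_finset_sum]
      refine Finset.sum_congr rfl fun i _ => ?_
      simp
    rw [h1, hsplit, Finset.sum_insert h0notin, Finset.sum_insert h1notin, hE0, hE1, one_mul,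
      one_mul]
    have h2 : (((N - 0 : ℕ) : OP)) * (-1) ^ (N - 0 - 1) + ((N - 1 : ℕ) : OP) * (-1) ^ (N - 1 - 1)
        = (-1) ^ m := by
      rcases m with _ | k
      · rw [hNm]; norm_num
      · rw [hNm]
        have e1 : (k + 1 + 1 - 0 : ℕ) = k + 2 := by omega
        have e2 : (k + 1 + 1 - 0 - 1 : ℕ) = k + 1 := by omega
        have e3 : (k + 1 + 1 - 1 : ℕ) = k + 1 := by omega
        have e4 : (k + 1 + 1 - 1 - 1 : ℕ) = k := by omega
        rw [e2, e4, e1, e3]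
        push_cast
        rw [pow_succ]
        ring
    rw [← add_assoc, h2]
    set S : OP := ∑ i ∈ Finset.Icc 2 N, E i * ((N - i : ℕ) : OP) * (-1) ^ (N - i - 1) with hS
    have hSm : S ∈ maximalIdeal OP := Ideal.sum_mem _ fun i hi => by
      have hi' := Finset.mem_Icc.1 hi
      exact Ideal.mul_mem_right _ _ (Ideal.mul_mem_right _ _ (hEm i (by omega) (by omega)))
    by_contra hns
    have hx : ((-1 : OP)) ^ m + S ∈ maximalIdeal OP :=
      (mem_maximalIdeal _).2 (mem_nonunits_iff.2 hns)
    have : ((-1 : OP)) ^ m ∈ maximalIdeal OP := by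
      have := Ideal.sub_mem _ hx hSm
      simpa using this
    exact mem_nonunits_iff.1 ((mem_maximalIdeal _).1 this) (isUnit_one.neg.pow m)
  obtain ⟨w, hw_root, hw_near⟩ := hP.is_henselian H hHmonic (-1) hHeval hHder
  have hw_unit : IsUnit w := by
    by_contra h
    have hwm : w ∈ maximalIdeal OP := (mem_maximalIdeal w).2 (mem_nonunits_iff.2 h)
    have : (-1 : OP) ∈ maximalIdeal OP := by
      have := Ideal.sub_mem _ hwm hw_near
      simpa using this
    exact mem_nonunits_iff.1 ((mem_maximalIdeal _).1 this) isUnit_one.neg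
  obtain ⟨W, hW⟩ := hw_unit
  set wi : OP := ((W⁻¹ : OPˣ) : OP) with hwidef
  have hwwi : w * wi = 1 := by rw [← hW]; exact W.mul_inv
  have hwwiL : (w : L) * (wi : L) = 1 := by exact_mod_cast congrArg (Subtype.val) hwwi
  have hwne : (w : L) ≠ 0 := by
    intro h
    rw [h, zero_mul] at hwwiL
    exact zero_ne_one hwwiL
  -- final root
  set t : O₁ := f.eval b * v with ht
  have htm : t ∈ maximalIdeal O₁ := Ideal.mul_mem_right _ _ h₁
  set s : O₁ := t * ι wi with hs
  have hsm : s ∈ maximalIdeal O₁ := Ideal.mul_mem_right _ _ htm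
  refine ⟨b + s, ?_, by simpa using hsm⟩
  -- compute
  have hFs : ((F.eval s : O₁) : L) = ∑ i ∈ Finset.range (N + 1),
      ((F.coeff i : O₁) : L) * ((s : O₁) : L) ^ i := by
    have h1 : ((F.eval s : O₁) : L) = Polynomial.eval ((s : O₁) : L) (F.map O₁.subtype) := by
      calc ((F.eval s : O₁) : L) = O₁.subtype (F.eval s) := rfl
        _ = F.eval₂ O₁.subtype (O₁.subtype s) := (Polynomial.eval₂_at_apply O₁.subtype s).symm
        _ = Polynomial.eval ((s : O₁) : L) (F.map O₁.subtype) := by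
            rw [← Polynomial.eval_map]
            rfl
    rw [h1, Polynomial.eval_eq_sum_range' (n := N + 1)
      (lt_of_le_of_lt (Polynomial.natDegree_map_le.trans
        (le_of_eq (Polynomial.natDegree_taylor f b))) (Nat.lt_succ_self N))]
    exact Finset.sum_congr rfl fun i _ => by rw [Polynomial.coeff_map]; rfl
  have hHw : ((H.eval w : OP) : L) = ∑ i ∈ Finset.range (N + 1),
      ((E i : OP) : L) * ((w : OP) : L) ^ (N - i) := by
    have h1 : H.eval w = ∑ i ∈ Finset.range (N + 1), E i * w ^ (N - i) := by
      rw [hH, Polynomial.eval_finset_sum]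
      exact Finset.sum_congr rfl fun i _ => by simp
    rw [h1]
    push_cast
    rfl
  have hkey : ((F.eval s : O₁) : L) * ((w : OP) : L) ^ N =
      ((f.eval b : O₁) : L) * ((H.eval w : OP) : L) := by
    rw [hFs, hHw, Finset.sum_mul, Finset.mul_sum]
    refine Finset.sum_congr rfl fun i hi => ?_
    have hi' : i ≤ N := Nat.lt_succ_iff.1 (Finset.mem_range.1 hi)
    have e1 : ((E i : OP) : L) * ((f.eval b : O₁) : L) = ((c i : O₁) : L) * ((t : O₁) : L) ^ i :=
      hEC i
    have e2 : ((s : O₁) : L) = ((t : O₁) : L) * ((wi : OP) : L) := by rw [hs]; rfl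
    have e3 : ((w : OP) : L) ^ N = ((w : OP) : L) ^ (N - i) * ((w : OP) : L) ^ i := by
      rw [← pow_add]
      congr 1
      omega
    have e4 : ((w : OP) : L) ^ i * ((wi : OP) : L) ^ i = 1 := by
      rw [← mul_pow, hwwiL, one_pow]
    rw [e2, mul_pow, e3]
    calc ((c i : O₁) : L) * (((t : O₁) : L) ^ i * ((wi : OP) : L) ^ i) *
          (((w : OP) : L) ^ (N - i) * ((w : OP) : L) ^ i)
        = ((c i : O₁) : L) * ((t : O₁) : L) ^ i * ((w : OP) : L) ^ (N - i) *
          (((w : OP) : L) ^ i * ((wi : OP) : L) ^ i) := by ring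
      _ = ((c i : O₁) : L) * ((t : O₁) : L) ^ i * ((w : OP) : L) ^ (N - i) := by
          rw [e4, mul_one]
      _ = ((E i : OP) : L) * ((f.eval b : O₁) : L) * ((w : OP) : L) ^ (N - i) := by rw [e1]
      _ = ((f.eval b : O₁) : L) * (((E i : OP) : L) * ((w : OP) : L) ^ (N - i)) := by ring
  have hz : ((F.eval s : O₁) : L) = 0 := by
    have h0 : ((F.eval s : O₁) : L) * ((w : OP) : L) ^ N = 0 := by
      rw [hkey, show H.eval w = 0 from hw_root]
      simp
    rcases mul_eq_zero.1 h0 with h | h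
    · exact h
    · exact absurd h (pow_ne_zero _ hwne)
  have hF0 : F.eval s = 0 := Subtype.ext hz
  show f.eval (b + s) = 0
  rw [add_comm b s, ← Polynomial.taylor_eval b f s]
  exact hF0

end Aux

/-- Let (L,P) be a valued field with P = Q₁Q₂ a composition of places:
the valuation ring O_P of P is the preimage, under the residue map of the valuation
ring O₁ of Q₁, of the valuation ring O₂ of Q₂ on the residue field LQ₁.  Then (L,P)
is henselian if and only if both (L,Q₁) and (LQ₁,Q₂) are henselian. -/
theorem stmt11 {L : Type*} [Field L]
    (O₁ OP : ValuationSubring L)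
    (O₂ : ValuationSubring (IsLocalRing.ResidueField O₁))
    (hcomp : ∀ x : L, x ∈ OP ↔ ∃ hx : x ∈ O₁, IsLocalRing.residue O₁ ⟨x, hx⟩ ∈ O₂) :
    HenselianLocalRing OP ↔ (HenselianLocalRing O₁ ∧ HenselianLocalRing O₂) := by
  classical
  have hle : OP ≤ O₁ := fun x hx => ((hcomp x).1 hx).choose
  set ι : OP →+* O₁ := OP.inclusion O₁ hle with hιdef
  have hres : ∀ x : OP, IsLocalRing.residue O₁ (ι x) ∈ O₂ := by
    intro x
    obtain ⟨h1, h2⟩ := (hcomp x).1 x.2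
    exact h2
  set ρ : OP →+* O₂ := ((IsLocalRing.residue O₁).comp ι).codRestrict O₂ hres with hρdef
  have hρval : ∀ x : OP, ((ρ x : O₂) : IsLocalRing.ResidueField O₁) =
      IsLocalRing.residue O₁ (ι x) := fun x => rfl
  have hρ_surj : Function.Surjective ρ := by
    rintro ⟨y, hy⟩
    obtain ⟨z, hz⟩ := Ideal.Quotient.mk_surjective (I := IsLocalRing.maximalIdeal O₁) y
    have hz' : IsLocalRing.residue O₁ z = y := hz
    have hz2 : (z : L) ∈ OP := by
      refine (hcomp z).2 ⟨z.2, ?_⟩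
      rw [show (⟨(z : L), z.2⟩ : O₁) = z from rfl, hz']
      exact hy
    exact ⟨⟨z, hz2⟩, Subtype.ext hz'⟩
  have hm₁P : ∀ y : O₁, y ∈ IsLocalRing.maximalIdeal O₁ → (y : L) ∈ OP := by
    intro y hy
    refine (hcomp y).2 ⟨y.2, ?_⟩
    rw [show (⟨(y : L), y.2⟩ : O₁) = y from rfl, (IsLocalRing.residue_eq_zero_iff _).2 hy]
    exact zero_mem _
  have hker : ∀ x : OP, ρ x = 0 ↔ ι x ∈ IsLocalRing.maximalIdeal O₁ := by
    intro x
    rw [← IsLocalRing.residue_eq_zero_iff]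
    exact ⟨fun h => congrArg Subtype.val h, fun h => Subtype.ext h⟩
  have hmono : ∀ x : OP, ι x ∈ IsLocalRing.maximalIdeal O₁ → x ∈ IsLocalRing.maximalIdeal OP := by
    intro x hx
    rw [IsLocalRing.mem_maximalIdeal, mem_nonunits_iff]
    intro hu
    exact mem_nonunits_iff.1 ((IsLocalRing.mem_maximalIdeal _).1 hx) (hu.map ι)
  have hρ_unit : ∀ x : OP, IsUnit (ρ x) → IsUnit x := by
    intro x hx
    obtain ⟨y', hy'⟩ := isUnit_iff_exists_inv.1 hx
    obtain ⟨y, rfl⟩ := hρ_surj y'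
    have h1 : ι (x * y - 1) ∈ IsLocalRing.maximalIdeal O₁ := by
      apply (hker _).1
      rw [map_sub, map_mul, map_one, hy', sub_self]
    have h2 : x * y - 1 ∈ IsLocalRing.maximalIdeal OP := hmono _ h1
    have h3 : IsUnit (x * y) := by
      by_contra h
      have hxy : x * y ∈ IsLocalRing.maximalIdeal OP :=
        (IsLocalRing.mem_maximalIdeal _).2 (mem_nonunits_iff.2 h)
      have h1' : (1 : OP) ∈ IsLocalRing.maximalIdeal OP := by
        have := Ideal.sub_mem _ hxy h2
        simpa using this
      exact mem_nonunits_iff.1 ((IsLocalRing.mem_maximalIdeal _).1 h1') isUnit_one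
    exact isUnit_of_mul_isUnit_left h3
  have hmem_iff : ∀ x : OP, x ∈ IsLocalRing.maximalIdeal OP ↔
      ρ x ∈ IsLocalRing.maximalIdeal O₂ := by
    intro x
    simp only [IsLocalRing.mem_maximalIdeal, mem_nonunits_iff]
    exact ⟨fun h hu => h (hρ_unit x hu), fun h hu => h (hu.map ρ)⟩
  constructor
  · intro hP
    constructor
    · -- O₁ is henselian
      exact aux_coarsening O₁ OP hle hm₁P hmono hP
    · -- O₂ is henselian : it is a quotient of OP
      refine { is_henselian := ?_ }
      intro f₂ hf₂ a₂ h₁ h₂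
      have hlift : f₂ ∈ Polynomial.lifts ρ := by
        obtain ⟨q, hq⟩ := Polynomial.map_surjective ρ hρ_surj f₂
        exact (Polynomial.mem_lifts _).2 ⟨q, hq⟩
      obtain ⟨F, hF1, _, hF3⟩ := Polynomial.lifts_and_degree_eq_and_monic hlift hf₂
      obtain ⟨a, ha⟩ := hρ_surj a₂
      have heval : ρ (F.eval a) = f₂.eval a₂ := by
        rw [← ha, ← hF1, eval_map_hom']
      have hder : ρ (F.derivative.eval a) = f₂.derivative.eval a₂ := by
        rw [← ha, ← hF1, Polynomial.derivative_map, eval_map_hom']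
      have hFa : F.eval a ∈ IsLocalRing.maximalIdeal OP := by
        rw [hmem_iff, heval]; exact h₁
      have hFa' : IsUnit (F.derivative.eval a) := by
        apply hρ_unit
        rw [hder]; exact h₂
      obtain ⟨b, hb_root, hb_near⟩ := hP.is_henselian F hF3 a hFa hFa'
      refine ⟨ρ b, ?_, ?_⟩
      · show f₂.eval (ρ b) = 0
        rw [← hF1, eval_map_hom', show F.eval b = 0 from hb_root, map_zero]
      · rw [← ha, ← map_sub]
        exact (hmem_iff _).1 hb_near
  · rintro ⟨h1, h2⟩
    refine { is_henselian := ?_ }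
    intro f hf a₀ hf1 hf2
    -- push down to O₂
    set f₂ : Polynomial O₂ := f.map ρ with hf₂def
    have hf₂monic : f₂.Monic := hf.map ρ
    have heval₂ : f₂.eval (ρ a₀) = ρ (f.eval a₀) := eval_map_hom' ρ f a₀
    have hder₂ : f₂.derivative.eval (ρ a₀) = ρ (f.derivative.eval a₀) := by
      rw [hf₂def, Polynomial.derivative_map]
      exact eval_map_hom' ρ f.derivative a₀
    obtain ⟨α, hα_root, hα_near⟩ := h2.is_henselian f₂ hf₂monic (ρ a₀)
      (by rw [heval₂]; exact (hmem_iff _).1 hf1) (by rw [hder₂]; exact hf2.map ρ)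
    obtain ⟨a₁, ha₁⟩ := hρ_surj α
    -- now work over O₁
    set f₁ : Polynomial O₁ := f.map ι with hf₁def
    have hf₁monic : f₁.Monic := hf.map ι
    have heval₁ : ∀ x : OP, f₁.eval (ι x) = ι (f.eval x) := fun x => eval_map_hom' ι f x
    have hder₁ : ∀ x : OP, f₁.derivative.eval (ι x) = ι (f.derivative.eval x) := by
      intro x
      rw [hf₁def, Polynomial.derivative_map]
      exact eval_map_hom' ι f.derivative x
    have hρeval : ∀ x : OP, ρ (f.eval x) = f₂.eval (ρ x) := fun x => (eval_map_hom' ρ f x).symm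
    have hρder : ∀ x : OP, ρ (f.derivative.eval x) = f₂.derivative.eval (ρ x) := by
      intro x
      rw [hf₂def, Polynomial.derivative_map]
      exact (eval_map_hom' ρ f.derivative x).symm
    have hm₁ : f₁.eval (ι a₁) ∈ IsLocalRing.maximalIdeal O₁ := by
      rw [heval₁]
      apply (hker _).1
      rw [hρeval, ha₁]
      exact hα_root
    have hu₁ : IsUnit (f₁.derivative.eval (ι a₁)) := by
      rw [hder₁]
      -- it suffices that it is not in the maximal ideal
      by_contra h
      have hmem : ι (f.derivative.eval a₁) ∈ IsLocalRing.maximalIdeal O₁ :=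
        (IsLocalRing.mem_maximalIdeal _).2 (mem_nonunits_iff.2 h)
      have hz : ρ (f.derivative.eval a₁) = 0 := (hker _).2 hmem
      rw [hρder, ha₁] at hz
      -- but f₂'(α) is a unit since α ≡ ρ a₀ mod m₂
      have hunit : IsUnit (f₂.derivative.eval α) := by
        by_contra hn
        have hαm : f₂.derivative.eval α ∈ IsLocalRing.maximalIdeal O₂ :=
          (IsLocalRing.mem_maximalIdeal _).2 (mem_nonunits_iff.2 hn)
        -- compare with f₂'(ρ a₀) via the residue map of O₂
        have hcong : f₂.derivative.eval α - f₂.derivative.eval (ρ a₀) ∈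
            IsLocalRing.maximalIdeal O₂ := by
          have := Polynomial.sub_dvd_eval_sub α (ρ a₀) f₂.derivative
          obtain ⟨k, hk⟩ := this
          rw [hk]
          exact Ideal.mul_mem_right _ _ hα_near
        have : f₂.derivative.eval (ρ a₀) ∈ IsLocalRing.maximalIdeal O₂ := by
          have := Ideal.sub_mem _ hαm hcong
          simpa using this
        have hu : IsUnit (f₂.derivative.eval (ρ a₀)) := by
          rw [hder₂]; exact hf2.map ρ
        exact mem_nonunits_iff.1 ((IsLocalRing.mem_maximalIdeal _).1 this) hu
      rw [hz] at hunit
      exact not_isUnit_zero hunit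
    obtain ⟨cc, hcc_root, hcc_near⟩ := h1.is_henselian f₁ hf₁monic (ι a₁) hm₁ hu₁
    -- cc lies in OP
    have hccOP : (cc : L) ∈ OP := by
      have h1' : ((cc - ι a₁ : O₁) : L) ∈ OP := hm₁P _ hcc_near
      have h2' : ((ι a₁ : O₁) : L) ∈ OP := a₁.2
      have : (cc : L) = ((cc - ι a₁ : O₁) : L) + ((ι a₁ : O₁) : L) := by push_cast; ring
      rw [this]
      exact OP.add_mem _ _ h1' h2'
    set cP : OP := ⟨(cc : L), hccOP⟩ with hcP
    have hιcP : ι cP = cc := Subtype.ext rfl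
    refine ⟨cP, ?_, ?_⟩
    · show f.eval cP = 0
      have : ι (f.eval cP) = 0 := by
        rw [← heval₁, hιcP]
        exact hcc_root
      exact Subtype.ext (congrArg (fun z : O₁ => (z : L)) this)
    · -- cP - a₀ ∈ m_P
      have hp1 : cP - a₁ ∈ IsLocalRing.maximalIdeal OP := by
        apply hmono
        rw [map_sub, hιcP]
        exact hcc_near
      have hp2 : a₁ - a₀ ∈ IsLocalRing.maximalIdeal OP := by
        rw [hmem_iff, map_sub, ha₁]
        exact hα_near
      have : cP - a₀ = (cP - a₁) + (a₁ - a₀) := by ring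
      rw [this]
      exact Ideal.add_mem _ hp1 hp2
end

section
/- Let (K,v) be a separable-algebraically maximal valued field and (K(x)|K,v) an immediate transcendental extension. Then the approximation type of x over K is transcendental: for every polynomial h(X) ∈ K[X] there is α ∈ v(x−K) such that v(h(c)) is constant for all c ∈ K with v(x−c) ≥ α. -/
/-- The extension K ≤ L of subfields of the valued field (Ω,w) is immediate:
value group and residue field do not grow. -/
def IsImmediateExt {Ω Γ : Type*} [Field Ω] [LinearOrderedCommGroupWithZero Γ]
    (w : Valuation Ω Γ) (K L : Subfield Ω) : Prop :=
  (∀ x ∈ L, x ≠ 0 → ∃ y ∈ K, w y = w x) ∧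
  (∀ x ∈ L, w x = 1 → ∃ y ∈ K, w (x - y) < 1)

/-- x is transcendental over the subfield M. -/
def TransOver {Ω : Type*} [Field Ω] (M : Subfield Ω) (x : Ω) : Prop :=
  ∀ f : Polynomial Ω, (∀ i, f.coeff i ∈ M) → Polynomial.eval x f = 0 → f = 0

open Polynomial

set_option linter.unusedSectionVars false
set_option maxHeartbeats 1000000
set_option synthInstance.maxHeartbeats 1000000

namespace Stmt14Aux

variable {Ω Γ : Type*} [Field Ω] [IsAlgClosed Ω] [LinearOrderedCommGroupWithZero Γ]

section PowLemmas
variable (a b : Γ)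

lemma pow_le_pow' (h : a ≤ b) (n : ℕ) : a ^ n ≤ b ^ n := by
  induction n with
  | zero => simp
  | succ n ih => rw [pow_succ, pow_succ]; exact mul_le_mul' ih h

lemma pow_lt_pow' (h : a < b) {n : ℕ} (hn : n ≠ 0) : a ^ n < b ^ n := by
  have hb : b ≠ 0 := fun h0 => not_lt_of_ge zero_le' (h0 ▸ h)
  induction n with
  | zero => exact absurd rfl hn
  | succ n ih =>
    rcases Nat.eq_zero_or_pos n with h0 | hpos
    · simpa [h0] using h
    · have := ih hpos.ne'
      rw [pow_succ, pow_succ]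
      exact mul_lt_mul_of_le_of_lt_of_nonneg_of_pos this.le h zero_le' (zero_lt_iff.2 (pow_ne_zero _ hb))

lemma le_of_pow_le' {n : ℕ} (hn : n ≠ 0) (h : a ^ n ≤ b ^ n) : a ≤ b := by
  by_contra hc
  exact absurd h (not_le_of_gt (pow_lt_pow' b a (lt_of_not_ge hc) hn))

lemma lt_of_pow_lt' {n : ℕ} (h : a ^ n < b ^ n) : a < b := by
  by_contra hc
  exact absurd h (not_lt_of_ge (pow_le_pow' b a (le_of_not_gt hc) n))

end PowLemmas

lemma exists_min_multiset {α : Type*} (f : α → Γ) {s : Multiset α} (hs : s ≠ 0) :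
    ∃ a ∈ s, ∀ b ∈ s, f a ≤ f b := by
  induction s using Multiset.induction_on with
  | empty => exact absurd rfl hs
  | cons a s ih =>
    rcases eq_or_ne s 0 with h0 | h0
    · subst h0
      refine ⟨a, Multiset.mem_cons_self _ _, fun b hb => ?_⟩
      rw [Multiset.mem_cons] at hb
      rcases hb with rfl | hb
      · exact le_rfl
      · simp at hb
    · obtain ⟨c, hc, hmin⟩ := ih h0
      rcases le_total (f a) (f c) with hle | hle
      · refine ⟨a, Multiset.mem_cons_self _ _, fun b hb => ?_⟩
        rw [Multiset.mem_cons] at hb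
        rcases hb with rfl | hb
        · exact le_rfl
        · exact hle.trans (hmin b hb)
      · refine ⟨c, Multiset.mem_cons_of_mem hc, fun b hb => ?_⟩
        rw [Multiset.mem_cons] at hb
        rcases hb with rfl | hb
        · exact hle
        · exact hmin b hb

variable (w : Valuation Ω Γ)

lemma sub_val_eq {t z c : Ω} (h : w (t - z) < w (t - c)) : w (z - c) = w (t - c) := by
  have hzc : z - c = (z - t) + (t - c) := by ring
  have hne : w (z - t) ≠ w (t - c) := by rw [w.map_sub_swap z t]; exact h.ne
  rw [hzc, w.map_add_of_distinct_val hne, w.map_sub_swap z t]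
  exact sup_eq_right.2 h.le

lemma sub_val_eq' {t r ci : Ω} (h : w (t - r) < w (t - ci)) : w (ci - r) = w (t - ci) := by
  have hzc : ci - r = (ci - t) + (t - r) := by ring
  have hne : w (ci - t) ≠ w (t - r) := by rw [w.map_sub_swap ci t]; exact h.ne'
  rw [hzc, w.map_add_of_distinct_val hne, w.map_sub_swap ci t]
  exact sup_eq_left.2 h.le

lemma val_eval (P : Polynomial Ω) (z : Ω) :
    w (P.eval z) = w P.leadingCoeff * (P.roots.map fun r => w (z - r)).prod := by
  conv_lhs => rw [(IsAlgClosed.splits P).eq_prod_roots]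
  rw [eval_mul, eval_C, map_mul, eval_multiset_prod, map_multiset_prod,
    Multiset.map_map, Multiset.map_map]
  refine congrArg _ (congrArg Multiset.prod (Multiset.map_congr rfl fun r _ => ?_))
  simp

variable (K : Subfield Ω)

noncomputable def polyRes (P : Polynomial Ω) (h : ∀ i, P.coeff i ∈ K) : Polynomial ↥K :=
  ∑ i ∈ Finset.range (P.natDegree + 1), C (⟨P.coeff i, h i⟩ : ↥K) * X ^ i

lemma polyRes_map (P : Polynomial Ω) (h : ∀ i, P.coeff i ∈ K) :
    (polyRes K P h).map (algebraMap ↥K Ω) = P := by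
  rw [polyRes, Polynomial.map_sum]
  conv_rhs => rw [P.as_sum_range' (P.natDegree + 1) (Nat.lt_succ_self _)]
  refine Finset.sum_congr rfl fun i _ => ?_
  rw [Polynomial.map_mul, Polynomial.map_C, Polynomial.map_pow, Polynomial.map_X,
    C_mul_X_pow_eq_monomial]
  rfl

lemma coeff_map_mem (q : Polynomial ↥K) (i : ℕ) :
    (q.map (algebraMap ↥K Ω)).coeff i ∈ K := by
  rw [coeff_map]
  exact (q.coeff i).2

variable (t : Ω)

lemma eval_mem_closure {L : Subfield Ω} (hKL : K ≤ L) {u : Ω} (hu : u ∈ L)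
    {P : Polynomial Ω} (hP : ∀ i, P.coeff i ∈ K) : P.eval u ∈ L := by
  rw [Polynomial.eval_eq_sum_range]
  exact Subfield.sum_mem L fun i _ => L.mul_mem (hKL (hP i)) (L.pow_mem hu i)

lemma t_not_mem (htrans : TransOver K t) : t ∉ K := by
  intro ht
  have h1 : ∀ i, (X - C t : Polynomial Ω).coeff i ∈ K := by
    intro i
    rcases i with _ | i
    · simpa using K.neg_mem ht
    · rcases i with _ | i
      · simpa using K.one_mem
      · simp [coeff_X, coeff_C]
  exact X_sub_C_ne_zero t (htrans (X - C t) h1 (by simp))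

lemma eval_t_ne (htrans : TransOver K t) {P : Polynomial Ω} (hP0 : P ≠ 0)
    (hPK : ∀ i, P.coeff i ∈ K) : P.eval t ≠ 0 := fun h => hP0 (htrans P hPK h)

lemma nomin (htrans : TransOver K t)
    (himm : IsImmediateExt w K (Subfield.closure ((K : Set Ω) ∪ {t}))) :
    ∀ c ∈ K, ∃ c' ∈ K, w (t - c') < w (t - c) := by
  intro c hc
  have htc : (t - c : Ω) ∈ Subfield.closure ((K : Set Ω) ∪ {t}) :=
    Subfield.sub_mem _ (Subfield.subset_closure (Or.inr rfl))
      (Subfield.subset_closure (Or.inl hc))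
  have htc0 : (t - c : Ω) ≠ 0 := sub_ne_zero.2 fun h => (t_not_mem K t htrans) (h ▸ hc)
  obtain ⟨d, hdK, hdval⟩ := himm.1 _ htc htc0
  have hd0 : (d : Ω) ≠ 0 := by
    intro h
    rw [h, map_zero] at hdval
    exact htc0 ((Valuation.zero_iff w).1 hdval.symm)
  have hmem2 : (t - c) / d ∈ Subfield.closure ((K : Set Ω) ∪ {t}) :=
    Subfield.div_mem _ htc (Subfield.subset_closure (Or.inl hdK))
  have hv1 : w ((t - c) / d) = 1 := by
    rw [map_div₀, ← hdval, div_self]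
    rw [hdval]
    exact (Valuation.ne_zero_iff w).2 htc0
  obtain ⟨e, heK, he⟩ := himm.2 _ hmem2 hv1
  refine ⟨c + d * e, K.add_mem hc (K.mul_mem hdK heK), ?_⟩
  have hrw : t - (c + d * e) = d * ((t - c) / d - e) := by
    field_simp
    ring
  rw [hrw, map_mul, hdval]
  calc w (t - c) * w ((t - c) / d - e) < w (t - c) * 1 := by
        refine mul_lt_mul_of_le_of_lt_of_nonneg_of_pos le_rfl he zero_le' (zero_lt_iff.2 ((Valuation.ne_zero_iff w).2 htc0))
    _ = w (t - c) := mul_one _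

lemma stab (P : Polynomial Ω)
    (hroots : ∀ r ∈ P.roots, ∃ c ∈ K, w (t - c) < w (t - r)) :
    ∃ c₀ ∈ K, ∀ z : Ω, w (t - z) ≤ w (t - c₀) → w (P.eval z) = w (P.eval t) := by
  have H : ∀ s : Multiset Ω, (∀ r ∈ s, ∃ c ∈ K, w (t - c) < w (t - r)) →
      ∃ c₀ ∈ K, ∀ r ∈ s, w (t - c₀) < w (t - r) := by
    intro s
    induction s using Multiset.induction_on with
    | empty => exact fun _ => ⟨0, K.zero_mem, by simp⟩
    | cons a s ih =>
      intro h
      obtain ⟨c₀, hc₀K, hall⟩ := ih fun r hr => h r (Multiset.mem_cons_of_mem hr)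
      obtain ⟨c₁, hc₁K, hlt⟩ := h a (Multiset.mem_cons_self _ _)
      rcases le_total (w (t - c₀)) (w (t - c₁)) with hle | hle
      · refine ⟨c₀, hc₀K, fun r hr => ?_⟩
        rw [Multiset.mem_cons] at hr
        rcases hr with rfl | hr
        · exact lt_of_le_of_lt hle hlt
        · exact hall r hr
      · refine ⟨c₁, hc₁K, fun r hr => ?_⟩
        rw [Multiset.mem_cons] at hr
        rcases hr with rfl | hr
        · exact hlt
        · exact lt_of_le_of_lt hle (hall r hr)
  obtain ⟨c₀, hc₀K, hall⟩ := H P.roots hroots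
  refine ⟨c₀, hc₀K, fun z hz => ?_⟩
  rw [val_eval w, val_eval w]
  exact congrArg _ (congrArg Multiset.prod (Multiset.map_congr rfl fun r hr =>
    sub_val_eq w (lt_of_le_of_lt hz (hall r hr))))

lemma nonstab (hNM : ∀ c ∈ K, ∃ c' ∈ K, w (t - c') < w (t - c))
    {P : Polynomial Ω} (hPet : P.eval t ≠ 0) (hP0 : P ≠ 0)
    {r₀ : Ω} (hr₀ : r₀ ∈ P.roots) (hr₀S : ∀ c ∈ K, w (t - r₀) ≤ w (t - c)) :
    ∀ c₀ ∈ K, ∃ c₁ ∈ K, ∃ c₂ ∈ K, w (t - c₁) ≤ w (t - c₀) ∧ w (t - c₂) ≤ w (t - c₀) ∧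
      w (P.eval c₁) ≠ w (P.eval c₂) := by
  classical
  intro c₀ hc₀
  set S : Ω → Prop := fun r => ∀ c ∈ K, w (t - r) ≤ w (t - c) with hS
  have H : ∃ c' ∈ K, w (t - c') ≤ w (t - c₀) ∧
      ∀ r ∈ P.roots, ¬ S r → w (t - c') < w (t - r) := by
    have key : ∀ s : Multiset Ω, ∃ c' ∈ K, w (t - c') ≤ w (t - c₀) ∧
        ∀ r ∈ s, ¬ S r → w (t - c') < w (t - r) := by
      intro s
      induction s using Multiset.induction_on with
      | empty => exact ⟨c₀, hc₀, le_rfl, by simp⟩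
      | cons a s ih =>
        obtain ⟨c', hc'K, hc'le, hall⟩ := ih
        by_cases hSa : S a
        · refine ⟨c', hc'K, hc'le, fun r hr hnr => ?_⟩
          rw [Multiset.mem_cons] at hr
          rcases hr with rfl | hr
          · exact absurd hSa hnr
          · exact hall r hr hnr
        · have hwit : ∃ c ∈ K, w (t - c) < w (t - a) := by
            by_contra hcon
            push_neg at hcon
            exact hSa fun c hc => le_of_not_gt fun hlt => absurd (hcon c hc) (not_le_of_gt hlt)
          obtain ⟨c₁, hc₁K, hlt⟩ := hwit
          rcases le_total (w (t - c')) (w (t - c₁)) with hle | hle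
          · refine ⟨c', hc'K, hc'le, fun r hr hnr => ?_⟩
            rw [Multiset.mem_cons] at hr
            rcases hr with rfl | hr
            · exact lt_of_le_of_lt hle hlt
            · exact hall r hr hnr
          · refine ⟨c₁, hc₁K, hle.trans hc'le, fun r hr hnr => ?_⟩
            rw [Multiset.mem_cons] at hr
            rcases hr with rfl | hr
            · exact hlt
            · exact lt_of_le_of_lt hle (hall r hr hnr)
    exact key P.roots
  obtain ⟨c', hc'K, hc'le, hdom⟩ := H
  obtain ⟨c₁, hc₁K, h1⟩ := hNM c' hc'K
  obtain ⟨c₂, hc₂K, h2⟩ := hNM c₁ hc₁K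
  obtain ⟨c₃, hc₃K, h3⟩ := hNM c₂ hc₂K
  set k₁ := Multiset.card (P.roots.filter S) with hk₁
  set Q := ((P.roots.filter fun r => ¬ S r).map fun r => w (t - r)).prod with hQdef
  have hform : ∀ ci : Ω, w (t - ci) < w (t - c') → (∀ r, S r → w (t - r) < w (t - ci)) →
      w (P.eval ci) = w P.leadingCoeff * (w (t - ci) ^ k₁ * Q) := by
    intro ci hlt hSr
    rw [val_eval w]
    refine congrArg _ ?_
    conv_lhs => rw [← Multiset.filter_add_not S P.roots]
    rw [Multiset.map_add, Multiset.prod_add]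
    have e1 : ((P.roots.filter S).map fun r => w (ci - r)).prod = w (t - ci) ^ k₁ := by
      have hcg : ((P.roots.filter S).map fun r => w (ci - r)) =
          ((P.roots.filter S).map fun _ => w (t - ci)) :=
        Multiset.map_congr rfl fun r hr => sub_val_eq' w (hSr r (Multiset.mem_filter.1 hr).2)
      rw [hcg, Multiset.map_const', Multiset.prod_replicate]
    have e2 : ((P.roots.filter fun r => ¬ S r).map fun r => w (ci - r)).prod = Q := by
      refine congrArg Multiset.prod (Multiset.map_congr rfl fun r hr => ?_)
      exact sub_val_eq w (lt_trans hlt (hdom r (Multiset.mem_of_mem_filter hr)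
        (Multiset.mem_filter.1 hr).2))
    rw [e1, e2]
  have e₁ := hform c₁ h1 (fun r hSr => lt_of_le_of_lt (hSr c₂ hc₂K) h2)
  have e₂ := hform c₂ (h2.trans h1) (fun r hSr => lt_of_le_of_lt (hSr c₃ hc₃K) h3)
  refine ⟨c₁, hc₁K, c₂, hc₂K, le_of_lt (lt_of_lt_of_le h1 hc'le),
    le_of_lt (lt_of_lt_of_le (h2.trans h1) hc'le), ?_⟩
  rw [e₁, e₂]
  intro heq
  have hlc : w P.leadingCoeff ≠ 0 := (Valuation.ne_zero_iff w).2 (leadingCoeff_ne_zero.2 hP0)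
  have hQ0 : Q ≠ 0 := by
    refine Multiset.prod_ne_zero ?_
    intro h0
    obtain ⟨r, hr, hw0⟩ := Multiset.mem_map.1 h0
    have htr : t = r := sub_eq_zero.1 ((Valuation.zero_iff w).1 hw0)
    exact hPet (htr ▸ isRoot_of_mem_roots (Multiset.mem_of_mem_filter hr))
  have heq2 := mul_left_cancel₀ hlc heq
  rw [mul_comm (w (t - c₁) ^ k₁) Q, mul_comm (w (t - c₂) ^ k₁) Q] at heq2
  have heq3 := mul_left_cancel₀ hQ0 heq2
  have hk₁0 : k₁ ≠ 0 := by
    have hmem : r₀ ∈ P.roots.filter S := Multiset.mem_filter.2 ⟨hr₀, hr₀S⟩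
    intro h0
    rw [hk₁] at h0
    exact absurd (Multiset.card_eq_zero.1 h0 ▸ hmem) (by simp)
  exact absurd heq3 (pow_lt_pow' (w (t - c₂)) (w (t - c₁)) h2 hk₁0).ne'


open IntermediateField in
lemma endgame
    (hmax : ∀ M : Subfield Ω, K ≤ M → (∀ x ∈ M, SepAlgOver K x) →
      IsImmediateExt w K M → M = K)
    (htrans : TransOver K t)
    (himm : IsImmediateExt w K (Subfield.closure ((K : Set Ω) ∪ {t})))
    (n₀ : ℕ)
    (hmin : ∀ P : Polynomial Ω, P ≠ 0 → (∀ i, P.coeff i ∈ K) → P.natDegree < n₀ →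
      ∀ z : Ω, P.eval z = 0 → ∃ c ∈ K, w (t - c) < w (t - z))
    (Z : Ω) (hZS : ∀ c ∈ K, w (t - Z) ≤ w (t - c))
    (g : Polynomial ↥K) (hg0 : g ≠ 0) (hgZ : Polynomial.aeval Z g = 0)
    (hgsep : g.Separable) (hgdeg : g.natDegree ≤ n₀) : False := by
  have hKle : K ≤ Subfield.closure ((K : Set Ω) ∪ {t}) :=
    fun y hy => Subfield.subset_closure (Or.inl hy)
  have htmem : t ∈ Subfield.closure ((K : Set Ω) ∪ {t}) :=
    Subfield.subset_closure (Or.inr rfl)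
  have hint : IsIntegral ↥K Z := IsAlgebraic.isIntegral ⟨g, hg0, hgZ⟩
  set m := minpoly ↥K Z with hm
  have hm0 : m ≠ 0 := minpoly.ne_zero hint
  have hmmonic : m.Monic := minpoly.monic hint
  have hmdvd : m ∣ g := minpoly.dvd ↥K Z hgZ
  have hmsep : m.Separable := hgsep.of_dvd hmdvd
  have hmdeg_le : m.natDegree ≤ n₀ := le_trans (Polynomial.natDegree_le_of_dvd hmdvd hg0) hgdeg
  set mm := m.map (algebraMap ↥K Ω) with hmm
  have hmmK : ∀ i, mm.coeff i ∈ K := coeff_map_mem K m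
  have hmm0 : mm ≠ 0 := Polynomial.map_ne_zero hm0
  have hmmZ : mm.eval Z = 0 := by
    rw [eval_map, ← aeval_def]
    exact minpoly.aeval ↥K Z
  have hmdeg : m.natDegree = n₀ := by
    refine le_antisymm hmdeg_le (le_of_not_gt fun hlt => ?_)
    have hlt' : mm.natDegree < n₀ := by rwa [Polynomial.natDegree_map]
    obtain ⟨c, hcK, hc⟩ := hmin mm hmm0 hmmK hlt' Z hmmZ
    exact absurd (hZS c hcK) (not_le_of_gt hc)
  have hn₀pos : 0 < n₀ := hmdeg ▸ minpoly.natDegree_pos hint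
  set M := Subfield.closure ((K : Set Ω) ∪ {Z}) with hMdef
  have hKM : K ≤ M := fun x hx => Subfield.subset_closure (Or.inl hx)
  have hZM : Z ∈ M := Subfield.subset_closure (Or.inr rfl)
  -- every element of M is a polynomial in Z of degree < n₀ over K
  have rep1 : ∀ x ∈ M, ∃ r : Polynomial ↥K, x = Polynomial.aeval Z r := by
    intro x hx
    induction hx using Subfield.closure_induction with
    | mem x hx' =>
      rcases hx' with hx' | hx'
      · exact ⟨C ⟨x, hx'⟩, by rw [aeval_C]; rfl⟩
      · exact ⟨X, by rw [Set.mem_singleton_iff.1 hx', aeval_X]⟩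
    | one => exact ⟨1, by simp⟩
    | add x y hx hy ihx ihy =>
      obtain ⟨r, hr⟩ := ihx
      obtain ⟨s, hs⟩ := ihy
      exact ⟨r + s, by rw [map_add, hr, hs]⟩
    | neg x hx ihx =>
      obtain ⟨r, hr⟩ := ihx
      exact ⟨-r, by rw [map_neg, hr]⟩
    | inv x hx ihx =>
      obtain ⟨r, hr⟩ := ihx
      by_cases h0 : Polynomial.aeval Z r = 0
      · exact ⟨0, by rw [hr, h0, map_zero, inv_zero]⟩
      · have hndvd : ¬ (m ∣ r) := by
          intro hd
          obtain ⟨q, rfl⟩ := hd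
          rw [map_mul, minpoly.aeval, zero_mul] at h0
          exact h0 rfl
        obtain ⟨u, v, huv⟩ := ((minpoly.irreducible hint).coprime_iff_not_dvd).2 hndvd
        refine ⟨v, ?_⟩
        have hmul : Polynomial.aeval Z v * Polynomial.aeval Z r = 1 := by
          have happ := congrArg (Polynomial.aeval Z) huv
          simpa [map_add, map_mul, minpoly.aeval] using happ
        rw [hr]
        exact (eq_inv_of_mul_eq_one_left hmul).symm
    | mul x y hx hy ihx ihy =>
      obtain ⟨r, hr⟩ := ihx
      obtain ⟨s, hs⟩ := ihy
      exact ⟨r * s, by rw [map_mul, hr, hs]⟩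
  have rep : ∀ x ∈ M, ∃ r : Polynomial ↥K, r.natDegree < n₀ ∧ x = Polynomial.aeval Z r := by
    intro x hx
    obtain ⟨r, hr⟩ := rep1 x hx
    refine ⟨r %ₘ m, ?_, ?_⟩
    · by_cases h0 : r %ₘ m = 0
      · simpa [h0] using hn₀pos
      · have hd := Polynomial.degree_modByMonic_lt r hmmonic
        have := Polynomial.natDegree_lt_natDegree h0 hd
        rwa [hmdeg] at this
    · conv_lhs => rw [hr, ← Polynomial.modByMonic_add_div r m]
      rw [map_add, map_mul, minpoly.aeval, zero_mul, add_zero]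
  -- the key valuation identity
  have keyval : ∀ r : Polynomial ↥K, r.natDegree < n₀ →
      w (Polynomial.aeval Z r) = w ((r.map (algebraMap ↥K Ω)).eval t) := by
    intro r hdeg
    by_cases h0 : r = 0
    · simp [h0]
    have hR0 : r.map (algebraMap ↥K Ω) ≠ 0 := Polynomial.map_ne_zero h0
    have hRd : (r.map (algebraMap ↥K Ω)).natDegree < n₀ := by
      rwa [Polynomial.natDegree_map]
    have hroots : ∀ ρ ∈ (r.map (algebraMap ↥K Ω)).roots, ∃ c ∈ K, w (t - c) < w (t - ρ) :=
      fun ρ hρ => hmin _ hR0 (coeff_map_mem K r) hRd ρ (isRoot_of_mem_roots hρ)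
    obtain ⟨c₀, hc₀K, hst⟩ := stab w K t _ hroots
    have h1 := hst Z (hZS c₀ hc₀K)
    rw [← h1, eval_map, aeval_def]
  -- M is an immediate extension of K
  have himmM : IsImmediateExt w K M := by
    constructor
    · intro x hx hx0
      obtain ⟨r, hdeg, hrep⟩ := rep x hx
      have hr0 : r ≠ 0 := fun h => hx0 (by rw [hrep, h, map_zero])
      have hu_mem : (r.map (algebraMap ↥K Ω)).eval t ∈ Subfield.closure ((K : Set Ω) ∪ {t}) :=
        eval_mem_closure K hKle htmem (coeff_map_mem K r)
      have hu0 : (r.map (algebraMap ↥K Ω)).eval t ≠ 0 :=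
        eval_t_ne K t htrans (Polynomial.map_ne_zero hr0) (coeff_map_mem K r)
      obtain ⟨y, hyK, hy⟩ := himm.1 _ hu_mem hu0
      exact ⟨y, hyK, by rw [hy, hrep, keyval r hdeg]⟩
    · intro x hx hx1
      obtain ⟨r, hdeg, hrep⟩ := rep x hx
      have hr0 : r ≠ 0 := by
        intro h
        rw [hrep, h, map_zero, map_zero] at hx1
        exact zero_ne_one hx1
      have hu_mem : (r.map (algebraMap ↥K Ω)).eval t ∈ Subfield.closure ((K : Set Ω) ∪ {t}) :=
        eval_mem_closure K hKle htmem (coeff_map_mem K r)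
      have huv : w ((r.map (algebraMap ↥K Ω)).eval t) = 1 := by
        rw [← keyval r hdeg, ← hrep]
        exact hx1
      obtain ⟨y, hyK, hy⟩ := himm.2 _ hu_mem huv
      refine ⟨y, hyK, ?_⟩
      set r₂ := r - C (⟨y, hyK⟩ : ↥K) with hr₂
      have hr₂deg : r₂.natDegree < n₀ :=
        lt_of_le_of_lt (Polynomial.natDegree_sub_le r _)
          (by rw [Polynomial.natDegree_C]; exact max_lt hdeg hn₀pos)
      have hx_y : x - y = Polynomial.aeval Z r₂ := by
        rw [hr₂, map_sub, aeval_C, ← hrep]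
        rfl
      have hmap : r₂.map (algebraMap ↥K Ω) = r.map (algebraMap ↥K Ω) - C y := by
        rw [hr₂, Polynomial.map_sub, Polynomial.map_C]
        rfl
      have hfin : w (x - y) = w ((r.map (algebraMap ↥K Ω)).eval t - y) := by
        rw [hx_y, keyval r₂ hr₂deg, hmap, eval_sub, eval_C]
      rw [hfin]
      exact hy
  -- every element of M is separable algebraic over K
  have hZsep : IsSeparable ↥K Z := hmsep
  haveI hEsep : Algebra.IsSeparable ↥K ↥((↥K)⟮Z⟯) :=
    (IntermediateField.isSeparable_adjoin_simple_iff_isSeparable ↥K Ω).2 hZsep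
  haveI : FiniteDimensional ↥K ↥((↥K)⟮Z⟯) := IntermediateField.adjoin.finiteDimensional hint
  have hME : M ≤ ((↥K)⟮Z⟯ : IntermediateField ↥K Ω).toSubfield := by
    refine Subfield.closure_le.2 ?_
    rintro x (hx | hx)
    · exact ((↥K)⟮Z⟯ : IntermediateField ↥K Ω).algebraMap_mem ⟨x, hx⟩
    · rw [Set.mem_singleton_iff.1 hx]
      exact IntermediateField.mem_adjoin_simple_self ↥K Z
  have hsepM : ∀ x ∈ M, SepAlgOver K x := by
    intro x hx
    have hxE : x ∈ (↥K)⟮Z⟯ := hME hx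
    set xe : ↥((↥K)⟮Z⟯) := ⟨x, hxE⟩ with hxe
    have hxeint : IsIntegral ↥K xe := IsIntegral.of_finite ↥K xe
    have hxsepe : IsSeparable ↥K xe := Algebra.IsSeparable.isSeparable ↥K xe
    have hmineq : minpoly ↥K x = minpoly ↥K xe := by
      have := minpoly.algebraMap_eq (A := ↥K)
        (algebraMap ↥((↥K)⟮Z⟯) Ω).injective xe
      rw [← this]
      rfl
    refine ⟨(minpoly ↥K x).map (algebraMap ↥K Ω), ?_, coeff_map_mem K _, ?_, ?_⟩
    · apply Polynomial.map_ne_zero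
      rw [hmineq]
      exact minpoly.ne_zero hxeint
    · rw [hmineq]
      exact Polynomial.Separable.map hxsepe
    · rw [eval_map, ← aeval_def]
      exact minpoly.aeval _ _
  have hMK := hmax M hKM hsepM himmM
  obtain ⟨c', hc'K, hc'⟩ := nomin w K t htrans himm Z (hMK ▸ hZM)
  exact absurd (hZS c' hc'K) (not_le_of_gt hc')


lemma trans_pow (htrans : TransOver K t) {p : ℕ} (hp : 0 < p) : TransOver K (t ^ p) := by
  intro f hf h0
  have hcoeff : ∀ i, (Polynomial.expand Ω p f).coeff i ∈ K := by
    intro i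
    rw [Polynomial.coeff_expand hp]
    split_ifs
    · exact hf _
    · exact K.zero_mem
  have heval : (Polynomial.expand Ω p f).eval t = 0 := by
    rw [Polynomial.expand_eval]
    exact h0
  exact (Polynomial.expand_eq_zero hp).1 (htrans _ hcoeff heval)

lemma himm_pow (himm : IsImmediateExt w K (Subfield.closure ((K : Set Ω) ∪ {t}))) (p : ℕ) :
    IsImmediateExt w K (Subfield.closure ((K : Set Ω) ∪ {t ^ p})) := by
  have hle : Subfield.closure ((K : Set Ω) ∪ {t ^ p}) ≤ Subfield.closure ((K : Set Ω) ∪ {t}) := by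
    refine Subfield.closure_le.2 ?_
    rintro x (hx | hx)
    · exact Subfield.subset_closure (Or.inl hx)
    · rw [Set.mem_singleton_iff] at hx
      subst hx
      have ht : t ∈ Subfield.closure ((K : Set Ω) ∪ {t}) := Subfield.subset_closure (Or.inr rfl)
      exact Subfield.pow_mem _ ht p
  exact ⟨fun x hx => himm.1 x (hle hx), fun x hx => himm.2 x (hle hx)⟩


lemma main
    (hmax : ∀ M : Subfield Ω, K ≤ M → (∀ x ∈ M, SepAlgOver K x) →
      IsImmediateExt w K M → M = K) :
    ∀ n : ℕ, ∀ t : Ω, TransOver K t →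
      IsImmediateExt w K (Subfield.closure ((K : Set Ω) ∪ {t})) →
      ∀ P : Polynomial Ω, P ≠ 0 → (∀ i, P.coeff i ∈ K) → P.natDegree ≤ n →
      ∀ z : Ω, P.eval z = 0 → ∃ c ∈ K, w (t - c) < w (t - z) := by
  intro n
  induction n using Nat.strong_induction_on with
  | _ n IH =>
  intro t htrans himm P hP0 hPK hPd z hz
  by_contra hcon
  push_neg at hcon
  have hzS : ∀ c ∈ K, w (t - z) ≤ w (t - c) := fun c hc => le_of_not_gt fun hlt =>
    absurd (hcon c hc) (not_le_of_gt hlt)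
  classical
  set Q : ℕ → Prop := fun d => ∃ P' : Polynomial Ω, P' ≠ 0 ∧ (∀ i, P'.coeff i ∈ K) ∧
      P'.natDegree = d ∧ ∃ z', P'.eval z' = 0 ∧ ∀ c ∈ K, w (t - z') ≤ w (t - c) with hQdef
  have hQP : Q P.natDegree := ⟨P, hP0, hPK, rfl, z, hz, hzS⟩
  have hex : ∃ d, Q d := ⟨_, hQP⟩
  set n₀ := Nat.find hex with hn₀def
  have hn₀le : n₀ ≤ n := le_trans (Nat.find_min' hex hQP) hPd
  have hmin : ∀ P' : Polynomial Ω, P' ≠ 0 → (∀ i, P'.coeff i ∈ K) → P'.natDegree < n₀ →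
      ∀ z', P'.eval z' = 0 → ∃ c ∈ K, w (t - c) < w (t - z') := by
    intro P' h0 hK hd z' hz'
    by_contra hcon'
    push_neg at hcon'
    exact Nat.find_min hex hd ⟨P', h0, hK, rfl, z', hz', fun c hc => le_of_not_gt fun hlt =>
      absurd (hcon' c hc) (not_le_of_gt hlt)⟩
  obtain ⟨P₀, hP₀0, hP₀K, hP₀d, z₀, hz₀, hz₀S⟩ := Nat.find_spec hex
  rw [← hn₀def] at hP₀d
  have hn₀1 : n₀ ≠ 0 := by
    intro h0
    rw [h0] at hP₀d
    have hC := Polynomial.eq_C_of_natDegree_eq_zero hP₀d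
    rw [hC, eval_C] at hz₀
    exact hP₀0 (by rw [hC, hz₀, map_zero])
  have hn₀2 : n₀ ≠ 1 := by
    intro h1
    have hd1 : P₀.natDegree = 1 := by rw [hP₀d, h1]
    have hc1 : P₀.coeff 1 ≠ 0 := by
      have hl := Polynomial.leadingCoeff_ne_zero.2 hP₀0
      rwa [Polynomial.leadingCoeff, hd1] at hl
    have heval : P₀.coeff 0 + P₀.coeff 1 * z₀ = 0 := by
      have he := hz₀
      rw [Polynomial.eval_eq_sum_range, hd1] at he
      simpa [Finset.sum_range_succ, mul_comm] using he
    have hz₀K : z₀ ∈ K := by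
      have hzeq : z₀ = -(P₀.coeff 0) / P₀.coeff 1 := by
        rw [eq_div_iff hc1]
        linear_combination heval
      rw [hzeq]
      exact K.div_mem (K.neg_mem (hP₀K 0)) (hP₀K 1)
    obtain ⟨c', hc'K, hc'⟩ := nomin w K t htrans himm z₀ hz₀K
    exact absurd (hz₀S c' hc'K) (not_le_of_gt hc')
  have hpr0 : polyRes K P₀ hP₀K ≠ 0 := by
    intro h
    apply hP₀0
    rw [← polyRes_map K P₀ hP₀K, h, Polynomial.map_zero]
  have hpraev : Polynomial.aeval z₀ (polyRes K P₀ hP₀K) = 0 := by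
    rw [aeval_def, ← eval_map, polyRes_map]
    exact hz₀
  have hintz : IsIntegral ↥K z₀ := IsAlgebraic.isIntegral ⟨polyRes K P₀ hP₀K, hpr0, hpraev⟩
  set m := minpoly ↥K z₀ with hmdef
  have hm0 : m ≠ 0 := minpoly.ne_zero hintz
  have hprdeg : (polyRes K P₀ hP₀K).natDegree = n₀ := by
    have hh := congrArg Polynomial.natDegree (polyRes_map K P₀ hP₀K)
    rw [Polynomial.natDegree_map] at hh
    rw [hh, hP₀d]
  have hmle : m.natDegree ≤ n₀ := by
    have hdeg := minpoly.degree_le_of_ne_zero ↥K z₀ hpr0 hpraev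
    calc m.natDegree ≤ (polyRes K P₀ hP₀K).natDegree := Polynomial.natDegree_le_natDegree hdeg
      _ = n₀ := hprdeg
  set mm := m.map (algebraMap ↥K Ω) with hmmdef
  have hmm0 : mm ≠ 0 := Polynomial.map_ne_zero hm0
  have hmmK : ∀ i, mm.coeff i ∈ K := coeff_map_mem K m
  have hmmz₀ : mm.eval z₀ = 0 := by
    rw [hmmdef, eval_map, ← aeval_def]
    exact minpoly.aeval ↥K z₀
  have hmdeg : m.natDegree = n₀ := by
    refine le_antisymm hmle (le_of_not_gt fun hlt => ?_)
    have hlt' : mm.natDegree < n₀ := by rwa [hmmdef, Polynomial.natDegree_map]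
    obtain ⟨c, hcK, hc⟩ := hmin mm hmm0 hmmK hlt' z₀ hmmz₀
    exact absurd (hz₀S c hcK) (not_le_of_gt hc)
  by_cases hder : derivative m = 0
  · -- inseparable case
    have hdpos : 0 < m.natDegree := minpoly.natDegree_pos hintz
    set p := ringChar Ω with hpdef
    haveI hchar : CharP Ω p := ringChar.charP Ω
    rcases CharP.char_is_prime_or_zero Ω p with hp | hp0
    swap
    · -- characteristic zero: impossible
      haveI : CharP Ω 0 := hp0 ▸ hchar
      haveI : CharZero Ω := CharP.charP_to_charZero Ω
      haveI hK0 : CharZero ↥K := by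
        refine ⟨fun a b hab => ?_⟩
        have hh := congrArg (algebraMap ↥K Ω) hab
        rw [map_natCast, map_natCast] at hh
        exact Nat.cast_injective hh
      have hcoeff := Polynomial.coeff_derivative m (m.natDegree - 1)
      rw [hder, Polynomial.coeff_zero] at hcoeff
      have hidx : m.natDegree - 1 + 1 = m.natDegree := Nat.succ_pred_eq_of_pos hdpos
      have hlc : m.coeff (m.natDegree - 1 + 1) ≠ 0 := by
        rw [hidx]
        have := Polynomial.leadingCoeff_ne_zero.2 hm0
        rwa [Polynomial.leadingCoeff] at this
      have hn1 : ((m.natDegree - 1 : ℕ) : ↥K) + 1 ≠ 0 := Nat.cast_add_one_ne_zero _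
      exact (mul_ne_zero hlc hn1) hcoeff.symm
    · -- positive characteristic p
      haveI hfact : Fact p.Prime := ⟨hp⟩
      haveI hcharK : CharP ↥K p := RingHom.charP (algebraMap ↥K Ω)
        (algebraMap ↥K Ω).injective p
      set m₁ := Polynomial.contract p m with hm₁def
      have hexp : Polynomial.expand ↥K p m₁ = m := Polynomial.expand_contract p hder hp.ne_zero
      have hd₁ : m.natDegree = m₁.natDegree * p := by
        rw [← hexp, Polynomial.natDegree_expand]
      have hd₁pos : m₁.natDegree ≠ 0 := by
        intro h0
        rw [h0, zero_mul] at hd₁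
        omega
      have hd₁lt : m₁.natDegree < n₀ := by
        rw [← hmdeg, hd₁]
        exact Nat.lt_mul_iff_one_lt_right (Nat.pos_of_ne_zero hd₁pos) |>.2 hp.one_lt
      have htrans' : TransOver K (t ^ p) := trans_pow K t htrans hp.pos
      have himm' : IsImmediateExt w K (Subfield.closure ((K : Set Ω) ∪ {t ^ p})) :=
        himm_pow w K t himm p
      set G₁ := m₁.map (algebraMap ↥K Ω) with hG₁def
      have hm₁0 : m₁ ≠ 0 := by
        intro h
        rw [h, map_zero] at hexp
        exact hm0 hexp.symm
      have hG₁0 : G₁ ≠ 0 := Polynomial.map_ne_zero hm₁0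
      have hG₁K : ∀ i, G₁.coeff i ∈ K := coeff_map_mem K m₁
      have hB1 : ∀ z', G₁.eval z' = 0 → ∃ c ∈ K, w (t ^ p - c) < w (t ^ p - z') := by
        intro z' h0
        exact IH m₁.natDegree (lt_of_lt_of_le hd₁lt hn₀le) (t ^ p) htrans' himm' G₁ hG₁0 hG₁K
          (le_of_eq (by rw [hG₁def, Polynomial.natDegree_map])) z' h0
      obtain ⟨C₀, hC₀K, hstab'⟩ := stab w K (t ^ p) G₁
        (fun ρ hρ => hB1 ρ (isRoot_of_mem_roots hρ))
      have hmmexp : mm = Polynomial.expand Ω p G₁ := by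
        rw [hmmdef, ← hexp, Polynomial.map_expand]
      by_cases hcase : ∃ c₀ ∈ K, w (t - c₀) ^ p ≤ w (t ^ p - C₀)
      · obtain ⟨c₀, hc₀K, hc₀⟩ := hcase
        have heval_mm : ∀ c : Ω, w (t - c) ≤ w (t - c₀) → w (mm.eval c) = w (G₁.eval (t ^ p)) := by
          intro c hc
          have h1 : mm.eval c = G₁.eval (c ^ p) := by
            rw [hmmexp, Polynomial.expand_eval]
          have h2 : w (t ^ p - c ^ p) ≤ w (t ^ p - C₀) := by
            have hsub : t ^ p - c ^ p = (t - c) ^ p := (sub_pow_char t c).symm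
            rw [hsub, map_pow]
            exact le_trans (pow_le_pow' (w (t - c)) (w (t - c₀)) hc p) hc₀
          rw [h1, hstab' (c ^ p) h2]
        have hz₀roots : z₀ ∈ mm.roots := by
          rw [Polynomial.mem_roots']
          exact ⟨hmm0, hmmz₀⟩
        have hmmet : mm.eval t ≠ 0 := eval_t_ne K t htrans hmm0 hmmK
        obtain ⟨c₁, hc₁K, c₂, hc₂K, hle₁, hle₂, hne⟩ :=
          nonstab w K t (nomin w K t htrans himm) hmmet hmm0 hz₀roots hz₀S c₀ hc₀K
        exact hne (by rw [heval_mm c₁ hle₁, heval_mm c₂ hle₂])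
      · push_neg at hcase
        have hdegXp : (X ^ p - C C₀ : Polynomial Ω).degree ≠ 0 := by
          rw [Polynomial.degree_X_pow_sub_C hp.pos]
          exact_mod_cast (Nat.cast_ne_zero (R := WithBot ℕ)).2 hp.ne_zero
        obtain ⟨s, hs⟩ := IsAlgClosed.exists_root (X ^ p - C C₀ : Polynomial Ω) hdegXp
        have hsp : s ^ p = C₀ := by
          have := hs
          rw [Polynomial.IsRoot, eval_sub, eval_pow, eval_X, eval_C, sub_eq_zero] at this
          exact this
        have hstrict : ∀ c ∈ K, w (t - s) < w (t - c) := by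
          intro c hc
          have h1 : w (t - s) ^ p = w (t ^ p - C₀) := by
            rw [← map_pow, sub_pow_char, hsp]
          exact lt_of_pow_lt' _ _ (h1 ▸ hcase c hc)
        have hPS : (X ^ p - C C₀ : Polynomial Ω) ≠ 0 := Polynomial.X_pow_sub_C_ne_zero hp.pos C₀
        have hPSK : ∀ i, (X ^ p - C C₀ : Polynomial Ω).coeff i ∈ K := by
          intro i
          rw [coeff_sub, Polynomial.coeff_X_pow, Polynomial.coeff_C]
          refine K.sub_mem ?_ ?_
          · split_ifs
            · exact K.one_mem
            · exact K.zero_mem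
          · split_ifs
            · exact hC₀K
            · exact K.zero_mem
        have hPSs : (X ^ p - C C₀ : Polynomial Ω).eval s = 0 := by
          rw [eval_sub, eval_pow, eval_X, eval_C, hsp, sub_self]
        have hpge : n₀ ≤ p := by
          by_contra hlt
          push_neg at hlt
          obtain ⟨c, hcK, hc⟩ := hmin (X ^ p - C C₀) hPS hPSK
            (by rw [Polynomial.natDegree_X_pow_sub_C]; exact hlt) s hPSs
          exact absurd (hstrict c hcK) (not_lt_of_gt hc)
        have hpn₀ : n₀ = p := by
          refine le_antisymm hpge ?_
          rw [← hmdeg, hd₁]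
          exact Nat.le_mul_of_pos_left p (Nat.pos_of_ne_zero hd₁pos)
        -- build the separable polynomial X^p + d·X − C₀ with a root close to t
        obtain ⟨c₂', hc₂'K, hc₂'⟩ := nomin w K t htrans himm 0 K.zero_mem
        have ht0 : t - (0 : Ω) ≠ 0 := sub_ne_zero.2 fun h => t_not_mem K t htrans (h ▸ K.zero_mem)
        have hγ₁0 : w (t - 0) ≠ 0 := (Valuation.ne_zero_iff w).2 ht0
        have haK : (0 : Ω) - c₂' ∈ K := K.sub_mem K.zero_mem hc₂'K
        have hwa : w ((0 : Ω) - c₂') = w (t - 0) := sub_val_eq' w hc₂'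
        have ha0 : (0 : Ω) - c₂' ≠ 0 := fun h => hγ₁0 (by rw [← hwa, h, map_zero])
        have hu_mem : t ^ p - C₀ ∈ Subfield.closure ((K : Set Ω) ∪ {t}) := by
          refine Subfield.sub_mem _ ?_ (Subfield.subset_closure (Or.inl hC₀K))
          have ht : t ∈ Subfield.closure ((K : Set Ω) ∪ {t}) := Subfield.subset_closure (Or.inr rfl)
          exact Subfield.pow_mem _ ht p
        have hu0 : t ^ p - C₀ ≠ 0 := by
          have := eval_t_ne K t htrans hPS hPSK
          rwa [eval_sub, eval_pow, eval_X, eval_C] at this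
        obtain ⟨dstar, hdstarK, hdstar⟩ := himm.1 _ hu_mem hu0
        have hδeq : w (t ^ p - C₀) = w (t - s) ^ p := by
          rw [← hsp, ← sub_pow_char, map_pow]
        have hdstar0 : dstar ≠ 0 := by
          intro h
          rw [h, map_zero] at hdstar
          exact hu0 ((Valuation.zero_iff w).1 hdstar.symm)
        set d := dstar / ((0 : Ω) - c₂') with hddef
        have hdK : d ∈ K := K.div_mem hdstarK haK
        have hd0 : d ≠ 0 := div_ne_zero hdstar0 ha0
        set dk : ↥K := ⟨d, hdK⟩ with hdkdef
        set C₀k : ↥K := ⟨C₀, hC₀K⟩ with hC₀kdef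
        have hdk0 : dk ≠ 0 := fun h => hd0 (congrArg Subtype.val h)
        set gK : Polynomial ↥K := X ^ p + (C dk * X - C C₀k) with hgKdef
        have hgder : derivative gK = C dk := by
          rw [hgKdef]
          simp [Polynomial.derivative_X_pow, CharP.cast_eq_zero ↥K p]
        have hgsep : gK.Separable := by
          rw [Polynomial.Separable, hgder]
          exact ⟨0, C dk⁻¹, by rw [zero_mul, zero_add, ← C_mul, inv_mul_cancel₀ hdk0, C_1]⟩
        set G₂ : Polynomial Ω := X ^ p + (C d * X - C C₀) with hG₂def
        have hgkmap : gK.map (algebraMap ↥K Ω) = G₂ := by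
          rw [hgKdef, hG₂def]
          rw [Polynomial.map_add, Polynomial.map_sub, Polynomial.map_mul, Polynomial.map_pow,
            Polynomial.map_X, Polynomial.map_C, Polynomial.map_C]
          rfl
        have hlow : (C d * X - C C₀ : Polynomial Ω).degree < (X ^ p : Polynomial Ω).degree := by
          rw [Polynomial.degree_X_pow]
          refine lt_of_le_of_lt (Polynomial.degree_sub_le _ _) ?_
          rw [max_lt_iff]
          constructor
          · refine lt_of_le_of_lt (Polynomial.degree_C_mul_X_le d) ?_
            exact_mod_cast Nat.one_lt_cast.2 hp.one_lt
          · refine lt_of_le_of_lt (Polynomial.degree_C_le) ?_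
            exact_mod_cast Nat.cast_pos.2 hp.pos
        have hmonic : G₂.Monic := (Polynomial.monic_X_pow p).add_of_left hlow
        have hG₂deg : G₂.natDegree = p := by
          have hdeg := Polynomial.degree_add_eq_left_of_degree_lt hlow
          rw [Polynomial.degree_X_pow] at hdeg
          exact Polynomial.natDegree_eq_of_degree_eq_some (hG₂def ▸ hdeg)
        have hG₂s : G₂.eval s = d * s := by
          rw [hG₂def, eval_add, eval_sub, eval_mul, eval_pow, eval_X, eval_C, eval_C, hsp]
          ring
        have hws : w s = w (t - 0) := by
          have := sub_val_eq w (hstrict 0 K.zero_mem)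
          rwa [sub_zero] at this
        have hprodval : w (G₂.eval s) = w (t - s) ^ p := by
          rw [hG₂s, map_mul, hws, hddef, map_div₀, hdstar, hwa, hδeq]
          rw [div_mul_cancel₀]
          exact hγ₁0
        have hcard : Multiset.card G₂.roots = p := by
          rw [Polynomial.splits_iff_card_roots.1 (IsAlgClosed.splits G₂), hG₂deg]
        have hroots0 : G₂.roots ≠ 0 := by
          intro h
          rw [h] at hcard
          simp at hcard
          omega
        obtain ⟨Y, hYmem, hYmin⟩ := exists_min_multiset (fun r => w (s - r)) hroots0
        have hprodeq : ((G₂.roots.map fun r => w (s - r))).prod = w (t - s) ^ p := by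
          have := val_eval w G₂ s
          rw [hmonic.leadingCoeff, map_one, one_mul] at this
          rw [← this, hprodval]
        have hYpow : w (s - Y) ^ p ≤ w (t - s) ^ p := by
          calc w (s - Y) ^ p
              = w (s - Y) ^ Multiset.card (G₂.roots.map fun r => w (s - r)) := by
                rw [Multiset.card_map, hcard]
            _ ≤ ((G₂.roots.map fun r => w (s - r))).prod := by
                refine Multiset.pow_card_le_prod ?_
                intro x hx
                obtain ⟨r, hr, rfl⟩ := Multiset.mem_map.1 hx
                exact hYmin r hr
            _ = w (t - s) ^ p := hprodeq
        have hYle : w (s - Y) ≤ w (t - s) := le_of_pow_le' _ _ hp.ne_zero hYpow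
        have hYS : ∀ c ∈ K, w (t - Y) ≤ w (t - c) := by
          intro c hc
          have h1 : t - Y = (t - s) + (s - Y) := by ring
          calc w (t - Y) ≤ max (w (t - s)) (w (s - Y)) := h1 ▸ w.map_add _ _
            _ = w (t - s) := max_eq_left hYle
            _ ≤ w (t - c) := (hstrict c hc).le
        have hYroot : Polynomial.aeval Y gK = 0 := by
          have hY := isRoot_of_mem_roots hYmem
          rw [aeval_def, ← eval_map, hgkmap]
          exact hY
        have hgK0 : gK ≠ 0 := by
          intro h
          apply hmonic.ne_zero
          rw [← hgkmap, h, Polynomial.map_zero]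
        have hgKdeg : gK.natDegree ≤ n₀ := by
          have hh := congrArg Polynomial.natDegree hgkmap
          rw [Polynomial.natDegree_map] at hh
          rw [hh, hG₂deg, hpn₀]
        exact endgame w K t hmax htrans himm n₀ hmin Y hYS gK hgK0 hYroot hgsep hgKdeg
  · -- separable case
    have hirr := minpoly.irreducible hintz
    have hsep : m.Separable := (Polynomial.separable_iff_derivative_ne_zero hirr).2 hder
    exact endgame w K t hmax htrans himm n₀ hmin z₀ hz₀S m hm0 (minpoly.aeval ↥K z₀) hsep
      (le_of_eq hmdeg)

end Stmt14Aux

/-- Let (K,v) be a separable-algebraically maximal valued field (no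
proper immediate separable-algebraic extensions; formulated inside an algebraically
closed valued field (Ω,w), which suffices since all extensions of v are conjugate)
and (K(t)|K,v) an immediate transcendental extension.  Then the approximation type
of t over K is transcendental: for every polynomial h with coefficients in K there
is α = v(t−c₀) ∈ v(t−K) such that v(h(c)) is constant for all c ∈ K with
v(t−c) ≥ α (multiplicatively: w(t−c) ≤ w(t−c₀)). -/
theorem stmt14 {Ω Γ : Type*} [Field Ω] [IsAlgClosed Ω] [LinearOrderedCommGroupWithZero Γ]
    (w : Valuation Ω Γ) (K : Subfield Ω)
    (hmax : ∀ M : Subfield Ω, K ≤ M → (∀ x ∈ M, SepAlgOver K x) →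
      IsImmediateExt w K M → M = K)  -- K is separable-algebraically maximal
    (t : Ω) (htrans : TransOver K t)
    (himm : IsImmediateExt w K (Subfield.closure ((K : Set Ω) ∪ {t}))) :
    ∀ h : Polynomial Ω, (∀ i, h.coeff i ∈ K) →
      ∃ c₀ ∈ K, ∀ c ∈ K, w (t - c) ≤ w (t - c₀) →
        w (Polynomial.eval c h) = w (Polynomial.eval c₀ h) := by
  intro h hK
  by_cases hh0 : h = 0
  · exact ⟨0, K.zero_mem, fun c _ _ => by rw [hh0]; simp⟩
  · have hroots : ∀ r ∈ h.roots, ∃ c ∈ K, w (t - c) < w (t - r) := fun r hr =>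
      Stmt14Aux.main w K hmax h.natDegree t htrans himm h hh0 hK le_rfl r
        (Polynomial.isRoot_of_mem_roots hr)
    obtain ⟨c₀, hc₀K, hst⟩ := Stmt14Aux.stab w K t h hroots
    exact ⟨c₀, hc₀K, fun c _ hle => by rw [hst c hle, hst c₀ le_rfl]⟩
end
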